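/- arXiv:1409.8193 — 4 statements merged into one kernel-verified Lean document; each statement's English description precedes it below -/
import Mathlib

section
/- Let P denote the space of Borel probability measures on Ω with the topology of weak convergence. Let T : P → P be continuous and let h : P → [0,∞) be lower semicontinuous and satisfy: h(Tν) ≤ h(ν) for every ν ∈ P, and h(Tν) < h(ν) whenever h(ν) > 0. Then for every ν₀ ∈ P, the set C of weak cluster points of the sequence (Tⁿν₀)_{n∈ℕ} (i.e. the set of all limits of weakly convergent subsequences) contains an element ν* with h(ν*) = 0. -/
open MeasureTheory Filter Topology
open Set
open scoped NNReal ENNReal Classical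

/-- The lattice `ℤ^d`. -/
abbrev Zd (d : ℕ) := Fin d → ℤ

/-- The configuration space `Ω = {1,…,q}^{ℤ^d}` (with the product topology). -/
abbrev Conf (d q : ℕ) := Zd d → Fin q

namespace Attractor

variable {d q : ℕ}

/-- Restriction of a configuration to the first `n` coordinates, via the enumeration `e`. -/
def res (e : ℕ ≃ Zd d) (n : ℕ) (ω : Conf d q) : Fin n → Fin q := fun i => ω (e i.val)

/-- Cylinder set. -/
def cyl (e : ℕ ≃ Zd d) (n : ℕ) (a : Fin n → Fin q) : Set (Conf d q) := {ω | res e n ω = a}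

lemma continuous_res (e : ℕ ≃ Zd d) (n : ℕ) : Continuous (res (d := d) (q := q) e n) :=
  continuous_pi fun _ => continuous_apply _

lemma isClopen_cyl (e : ℕ ≃ Zd d) (n : ℕ) (a : Fin n → Fin q) : IsClopen (cyl e n a) :=
  (isClopen_discrete {a}).preimage (continuous_res e n)

lemma measurableSet_cyl (e : ℕ ≃ Zd d) (n : ℕ) (a : Fin n → Fin q) :
    MeasurableSet (cyl e n a) :=
  (isClopen_cyl e n a).isOpen.measurableSet

lemma mem_cyl_res (e : ℕ ≃ Zd d) (n : ℕ) (ω : Conf d q) : ω ∈ cyl e n (res e n ω) := rfl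

lemma res_succ (e : ℕ ≃ Zd d) (n : ℕ) (ω : Conf d q) :
    res e (n + 1) ω = Fin.snoc (res e n ω) (ω (e n)) := by
  funext i
  refine Fin.lastCases ?_ ?_ i
  · simp [res, Fin.snoc_last]
  · intro j
    simp [res, Fin.snoc_castSucc]

lemma res_init (e : ℕ ≃ Zd d) (n : ℕ) (ω : Conf d q) :
    Fin.init (res e (n + 1) ω) = res e n ω := by
  rw [res_succ]; exact Fin.init_snoc _ _

lemma cyl_zero (e : ℕ ≃ Zd d) (a : Fin 0 → Fin q) : cyl e 0 a = univ := by
  ext ω; simp only [cyl, mem_setOf_eq, mem_univ, iff_true]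
  funext i; exact i.elim0

lemma cyl_decomp (e : ℕ ≃ Zd d) (n : ℕ) (a : Fin n → Fin q) :
    cyl e n a = ⋃ b : Fin q, cyl e (n + 1) (Fin.snoc a b) := by
  ext ω
  simp only [cyl, mem_setOf_eq, mem_iUnion, res_succ]
  constructor
  · rintro rfl; exact ⟨ω (e n), rfl⟩
  · rintro ⟨b, hb⟩
    have := congrArg Fin.init hb
    simpa [Fin.init_snoc] using this

lemma cyl_nonempty (e : ℕ ≃ Zd d) (hq : 0 < q) (n : ℕ) (a : Fin n → Fin q) :
    (cyl e n a).Nonempty := by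
  refine ⟨fun z => if h : (e.symm z : ℕ) < n then a ⟨e.symm z, h⟩ else ⟨0, hq⟩, ?_⟩
  show res e n _ = a
  funext i
  simp only [res, Equiv.symm_apply_apply]
  rw [dif_pos i.isLt]

lemma cyl_disjoint (e : ℕ ≃ Zd d) (n : ℕ) {a b : Fin n → Fin q} (hab : a ≠ b) :
    Disjoint (cyl e n a) (cyl e n b) := by
  rw [Set.disjoint_left]
  intro ω ha hb
  exact hab (ha.symm.trans hb)

lemma cyl_subset_of_res_eq (e : ℕ ≃ Zd d) {m n : ℕ} (h : n ≤ m) (a : Fin m → Fin q)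
    {x : Conf d q} (hx : x ∈ cyl e m a) : x ∈ cyl e n (fun i => a (Fin.castLE h i)) := by
  funext i
  have := congrFun hx (Fin.castLE h i)
  simpa [res] using this

lemma res_eq_of_res_eq (e : ℕ ≃ Zd d) {m n : ℕ} (h : m ≤ n) {x y : Conf d q}
    (hxy : res e n x = res e n y) : res e m x = res e m y := by
  funext i
  have := congrFun hxy (Fin.castLE h i)
  simpa [res] using this

lemma measure_cyl_succ (e : ℕ ≃ Zd d) (μ : Measure (Conf d q)) (n : ℕ) (a : Fin n → Fin q) :
    μ (cyl e n a) = ∑ b : Fin q, μ (cyl e (n + 1) (Fin.snoc a b)) := by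
  rw [cyl_decomp e n a, measure_iUnion, tsum_fintype]
  · intro b b' hbb'
    refine cyl_disjoint e _ fun hcontr => hbb' ?_
    have := congrFun hcontr (Fin.last n)
    simpa [Fin.snoc_last] using this
  · exact fun b => measurableSet_cyl e _ _


section content
variable (e : ℕ ≃ Zd d) (p : ∀ n : ℕ, (Fin n → Fin q) → ℝ≥0)

/-- The set of `n`-cylinders touching `K`. -/
noncomputable def touch (n : ℕ) (K : Set (Conf d q)) : Finset (Fin n → Fin q) :=
  Finset.univ.filter fun a => (K ∩ cyl e n a).Nonempty

lemma mem_touch {n : ℕ} {K : Set (Conf d q)} {a : Fin n → Fin q} :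
    a ∈ touch e n K ↔ (K ∩ cyl e n a).Nonempty := by
  simp [touch]

/-- Outer approximation of the `p`-mass of `K` at level `n`. -/
noncomputable def stil (n : ℕ) (K : Set (Conf d q)) : ℝ≥0 :=
  ∑ a ∈ touch e n K, p n a

/-- Summing a function over maps `Fin (n+1) → Fin q` whose restriction lies in `t`. -/
lemma sum_filter_init {n : ℕ} (g : (Fin (n + 1) → Fin q) → ℝ≥0)
    (t : Finset (Fin n → Fin q)) :
    ∑ a ∈ Finset.univ.filter (fun a => (fun i => a i.castSucc) ∈ t), g a
      = ∑ c ∈ t, ∑ b : Fin q, g (Fin.snoc c b) := by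
  rw [← Finset.sum_product']
  refine Finset.sum_nbij' (fun a => ((fun i => a i.castSucc), a (Fin.last n)))
    (fun x : (Fin n → Fin q) × Fin q => (Fin.snoc x.1 x.2 : Fin (n + 1) → Fin q))
    ?_ ?_ ?_ ?_ ?_
  · intro a ha
    simp only [Finset.mem_filter, Finset.mem_univ, true_and] at ha
    simp [Finset.mem_product, ha]
  · intro x hx
    simp only [Finset.mem_product, Finset.mem_univ, and_true] at hx
    have h1 : (fun i => (Fin.snoc x.1 x.2 : Fin (n + 1) → Fin q) (Fin.castSucc i)) = x.1 := by
      funext i; rw [Fin.snoc_castSucc]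
    simp only [Finset.mem_filter, Finset.mem_univ, true_and, h1]
    exact hx
  · intro a _
    exact Fin.snoc_init_self a
  · intro x _
    have h1 : (fun i => (Fin.snoc x.1 x.2 : Fin (n + 1) → Fin q) (Fin.castSucc i)) = x.1 := by
      funext i; rw [Fin.snoc_castSucc]
    simp only [h1, Fin.snoc_last]
  · intro a _
    show g a = g (Fin.snoc (Fin.init a) (a (Fin.last n)))
    rw [Fin.snoc_init_self]

/-- The candidate limit outer mass. -/
noncomputable def lam (K : Set (Conf d q)) : ℝ≥0 := ⨅ n, stil e p n K

variable {p}

lemma stil_succ_le (hpc : ∀ n (c : Fin n → Fin q), p n c = ∑ b : Fin q, p (n + 1) (Fin.snoc c b))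
    (n : ℕ) (K : Set (Conf d q)) : stil e p (n + 1) K ≤ stil e p n K := by
  have hsub : touch e (n + 1) K ⊆
      Finset.univ.filter (fun a => (fun i => a i.castSucc) ∈ touch e n K) := by
    intro a ha
    rw [mem_touch] at ha
    obtain ⟨x, hxK, hx⟩ := ha
    simp only [Finset.mem_filter, Finset.mem_univ, true_and, mem_touch]
    refine ⟨x, hxK, ?_⟩
    show res e n x = fun i => a i.castSucc
    rw [← hx]
    have := res_init e n x
    rw [← this]
    rfl
  calc stil e p (n + 1) K
      ≤ ∑ a ∈ Finset.univ.filter (fun a => (fun i => a i.castSucc) ∈ touch e n K), p (n + 1) a :=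
        Finset.sum_le_sum_of_subset hsub
    _ = ∑ c ∈ touch e n K, ∑ b : Fin q, p (n + 1) (Fin.snoc c b) := sum_filter_init _ _
    _ = ∑ c ∈ touch e n K, p n c := by
        refine Finset.sum_congr rfl fun c _ => (hpc n c).symm
    _ = stil e p n K := rfl

lemma stil_antitone (hpc : ∀ n (c : Fin n → Fin q), p n c = ∑ b : Fin q, p (n + 1) (Fin.snoc c b))
    (K : Set (Conf d q)) : Antitone fun n => stil e p n K :=
  antitone_nat_of_succ_le fun n => stil_succ_le e hpc n K

lemma stil_univ (hq : 0 < q) (hp1 : ∀ a, p 0 a = 1)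
    (hpc : ∀ n (c : Fin n → Fin q), p n c = ∑ b : Fin q, p (n + 1) (Fin.snoc c b)) (n : ℕ) :
    stil e p n univ = 1 := by
  have htouch : ∀ m : ℕ, touch e m (univ : Set (Conf d q)) = Finset.univ := by
    intro m
    ext a
    simp only [Finset.mem_univ, iff_true, mem_touch, univ_inter]
    exact cyl_nonempty e hq m a
  have key : ∀ m : ℕ, ∑ a : Fin m → Fin q, p m a = 1 := by
    intro m
    induction m with
    | zero =>
      haveI : Unique (Fin 0 → Fin q) :=
        ⟨⟨fun i => i.elim0⟩, fun f => funext fun i => i.elim0⟩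
      rw [Fintype.sum_unique]
      exact hp1 _
    | succ m ih =>
      have : (Finset.univ : Finset (Fin (m + 1) → Fin q)) =
          Finset.univ.filter
            (fun a => (fun i => a i.castSucc) ∈ (Finset.univ : Finset (Fin m → Fin q))) := by
        simp
      rw [this, sum_filter_init]
      rw [← ih]
      exact Finset.sum_congr rfl fun c _ => (hpc m c).symm
  rw [stil, htouch n]
  exact key n

/-- Disjoint compact sets are separated at some cylinder level. -/
lemma exists_separation {K L : Set (Conf d q)} (hK : IsCompact K) (hL : IsCompact L)
    (hdisj : Disjoint K L) :
    ∃ N : ℕ, ∀ x ∈ K, ∀ y ∈ L, res e N x ≠ res e N y := by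
  by_contra hcon
  push_neg at hcon
  set B : ℕ → Set (Conf d q × Conf d q) :=
    fun n => {xy | xy.1 ∈ K ∧ xy.2 ∈ L ∧ res e n xy.1 = res e n xy.2} with hB
  have hclosed : ∀ n, IsClosed (B n) := by
    intro n
    have hrw : B n = (Prod.fst ⁻¹' K) ∩ ((Prod.snd ⁻¹' L) ∩
        ((fun xy : Conf d q × Conf d q => (res e n xy.1, res e n xy.2)) ⁻¹'
          {uv : (Fin n → Fin q) × (Fin n → Fin q) | uv.1 = uv.2})) := by
      rfl
    rw [hrw]
    have hc : Continuous fun xy : Conf d q × Conf d q => (res e n xy.1, res e n xy.2) :=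
      ((continuous_res e n).comp continuous_fst).prodMk
        ((continuous_res e n).comp continuous_snd)
    exact (hK.isClosed.preimage continuous_fst).inter
      ((hL.isClosed.preimage continuous_snd).inter
        ((isClosed_discrete _).preimage hc))
  have hanti : ∀ n, B (n + 1) ⊆ B n := by
    rintro n ⟨x, y⟩ ⟨hx, hy, hres⟩
    exact ⟨hx, hy, res_eq_of_res_eq e (Nat.le_succ n) hres⟩
  have hne : ∀ n, (B n).Nonempty := by
    intro n
    obtain ⟨x, hx, y, hy, hres⟩ := hcon n
    exact ⟨(x, y), hx, hy, hres⟩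
  have hnonempty : (⋂ n, B n).Nonempty := by
    refine IsCompact.nonempty_iInter_of_sequence_nonempty_isCompact_isClosed B hanti hne
      ?_ hclosed
    exact (hclosed 0).isCompact
  obtain ⟨⟨x, y⟩, hxy⟩ := hnonempty
  simp only [mem_iInter] at hxy
  have hxK : x ∈ K := (hxy 0).1
  have hyL : y ∈ L := (hxy 0).2.1
  have hxy_eq : x = y := by
    funext z
    have h1 := (hxy (e.symm z + 1)).2.2
    have := congrFun h1 ⟨e.symm z, Nat.lt_succ_self _⟩
    simpa [res] using this
  rw [hxy_eq] at hxK
  exact (Set.disjoint_left.mp hdisj hxK) hyL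

-- helper: the intersection of the inter with a coordinate-structure
lemma touch_union (n : ℕ) (K L : Set (Conf d q)) :
    touch e n (K ∪ L) = touch e n K ∪ touch e n L := by
  ext a
  simp only [Finset.mem_union, mem_touch, union_inter_distrib_right, union_nonempty]

lemma stil_union_le (n : ℕ) (K L : Set (Conf d q)) :
    stil e p n (K ∪ L) ≤ stil e p n K + stil e p n L := by
  rw [stil, touch_union]
  calc ∑ a ∈ touch e n K ∪ touch e n L, p n a
      ≤ ∑ a ∈ touch e n K, p n a + ∑ a ∈ touch e n L \ touch e n K, p n a := by
        rw [← Finset.sum_union Finset.disjoint_sdiff, Finset.union_sdiff_self_eq_union]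
    _ ≤ ∑ a ∈ touch e n K, p n a + ∑ a ∈ touch e n L, p n a :=
        add_le_add (le_refl _) (Finset.sum_le_sum_of_subset Finset.sdiff_subset)
    _ = stil e p n K + stil e p n L := rfl

lemma stil_mono (n : ℕ) {K L : Set (Conf d q)} (h : K ⊆ L) :
    stil e p n K ≤ stil e p n L := by
  refine Finset.sum_le_sum_of_subset ?_
  intro a ha
  rw [mem_touch] at ha ⊢
  exact ha.mono (inter_subset_inter_left _ h)

lemma tendsto_stil_lam
    (hpc : ∀ n (c : Fin n → Fin q), p n c = ∑ b : Fin q, p (n + 1) (Fin.snoc c b))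
    (K : Set (Conf d q)) :
    Tendsto (fun n => stil e p n K) atTop (𝓝 (lam e p K)) :=
  tendsto_atTop_ciInf (stil_antitone e hpc K) (OrderBot.bddBelow _)

/-- The content built from `p`. -/
noncomputable def limContent
    (hpc : ∀ n (c : Fin n → Fin q), p n c = ∑ b : Fin q, p (n + 1) (Fin.snoc c b)) :
    Content (Conf d q) where
  toFun K := lam e p K
  mono' K₁ K₂ h := ciInf_mono (OrderBot.bddBelow _) fun n => stil_mono e n h
  sup_disjoint' := by
    intro K₁ K₂ hdisj _ _
    obtain ⟨N, hN⟩ := exists_separation e K₁.isCompact K₂.isCompact hdisj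
    have hdis_touch : ∀ n, N ≤ n → Disjoint (touch e n (K₁ : Set (Conf d q)))
        (touch e n (K₂ : Set (Conf d q))) := by
      intro n hn
      rw [Finset.disjoint_left]
      intro a ha₁ ha₂
      rw [mem_touch] at ha₁ ha₂
      obtain ⟨x, hxK, hx⟩ := ha₁
      obtain ⟨y, hyK, hy⟩ := ha₂
      have : res e n x = res e n y := hx.trans hy.symm
      exact hN x hxK y hyK (res_eq_of_res_eq e hn this)
    have heq : ∀ n, N ≤ n →
        stil e p n ((K₁ : Set (Conf d q)) ∪ K₂) = stil e p n K₁ + stil e p n K₂ := by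
      intro n hn
      rw [stil, touch_union, Finset.sum_union (hdis_touch n hn)]
      rfl
    have t1 : Tendsto (fun n => stil e p n ((K₁ : Set (Conf d q)) ∪ K₂)) atTop
        (𝓝 (lam e p ((K₁ : Set (Conf d q)) ∪ K₂))) := tendsto_stil_lam e hpc _
    have t2 : Tendsto (fun n => stil e p n K₁ + stil e p n K₂) atTop
        (𝓝 (lam e p K₁ + lam e p K₂)) :=
      ((tendsto_stil_lam e hpc _).add (tendsto_stil_lam e hpc _))
    have : Tendsto (fun n => stil e p n ((K₁ : Set (Conf d q)) ∪ K₂)) atTop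
        (𝓝 (lam e p K₁ + lam e p K₂)) := by
      refine t2.congr' ?_
      filter_upwards [eventually_ge_atTop N] with n hn
      exact (heq n hn).symm
    show lam e p ((K₁ ⊔ K₂ : TopologicalSpace.Compacts (Conf d q)) : Set (Conf d q))
        = lam e p K₁ + lam e p K₂
    have h0 : lam e p ((K₁ ⊔ K₂ : TopologicalSpace.Compacts (Conf d q)) : Set (Conf d q))
        = lam e p ((K₁ : Set (Conf d q)) ∪ K₂) := rfl
    rw [h0]
    exact tendsto_nhds_unique t1 this
  sup_le' := by
    intro K₁ K₂
    have t2 : Tendsto (fun n => stil e p n K₁ + stil e p n K₂) atTop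
        (𝓝 (lam e p K₁ + lam e p K₂)) :=
      ((tendsto_stil_lam e hpc _).add (tendsto_stil_lam e hpc _))
    refine ge_of_tendsto t2 (Eventually.of_forall fun n => ?_)
    calc lam e p ((K₁ ⊔ K₂ : TopologicalSpace.Compacts (Conf d q)) : Set (Conf d q))
        ≤ stil e p n ((K₁ : Set (Conf d q)) ∪ K₂) := ciInf_le (OrderBot.bddBelow _) n
      _ ≤ stil e p n K₁ + stil e p n K₂ := stil_union_le e n _ _

lemma exists_limit_measure (hq : 0 < q) (hp1 : ∀ a, p 0 a = 1)
    (hpc : ∀ n (c : Fin n → Fin q), p n c = ∑ b : Fin q, p (n + 1) (Fin.snoc c b)) :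
    ∃ μ : Measure (Conf d q), IsProbabilityMeasure μ ∧
      ∀ K : Set (Conf d q), IsCompact K → (lam e p K : ℝ≥0∞) ≤ μ K := by
  let C := limContent e hpc
  refine ⟨C.measure, ⟨?_⟩, ?_⟩
  · rw [C.measure_apply MeasurableSet.univ]
    have h1 : C.outerMeasure (univ : Set (Conf d q)) = C.innerContent ⟨univ, isOpen_univ⟩ :=
      C.outerMeasure_opens ⟨univ, isOpen_univ⟩
    rw [h1, C.innerContent_of_isCompact isCompact_univ isOpen_univ]
    show ((lam e p univ : ℝ≥0) : ℝ≥0∞) = 1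
    have : lam e p (univ : Set (Conf d q)) = 1 := by
      rw [lam]
      simp [stil_univ e hq hp1 hpc]
    rw [this]; rfl
  · intro K hK
    rw [C.measure_apply hK.isClosed.measurableSet]
    exact C.le_outerMeasure_compacts ⟨K, hK⟩

end content

/-- ProbabilityMeasure version of cylinder additivity. -/
lemma probmeas_cyl_succ (e : ℕ ≃ Zd d) (μ : ProbabilityMeasure (Conf d q)) (n : ℕ)
    (a : Fin n → Fin q) :
    μ (cyl e n a) = ∑ b : Fin q, μ (cyl e (n + 1) (Fin.snoc a b)) := by
  apply ENNReal.coe_injective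
  push_cast
  simp only [ProbabilityMeasure.ennreal_coeFn_eq_coeFn_toMeasure]
  exact measure_cyl_succ e μ.toMeasure n a

/-- Sequential compactness of the space of probability measures on `Conf d q`. -/
lemma exists_conv_subseq (hd : 1 ≤ d) (hq : 0 < q)
    (μs : ℕ → ProbabilityMeasure (Conf d q)) :
    ∃ (ν : ProbabilityMeasure (Conf d q)) (φ : ℕ → ℕ), StrictMono φ ∧
      Tendsto (fun k => μs (φ k)) atTop (𝓝 ν) := by
  haveI : Nonempty (Fin d) := ⟨⟨0, hd⟩⟩
  haveI : Infinite (Zd d) := by infer_instance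
  letI : Encodable (Zd d) := Encodable.ofCountable _
  letI : Denumerable (Zd d) := Denumerable.ofEncodableOfInfinite _
  let e : ℕ ≃ Zd d := (Denumerable.eqv (Zd d)).symm
  -- extract a subsequence along which all cylinder probabilities converge
  let Φ : ProbabilityMeasure (Conf d q) → ∀ n : ℕ, (Fin n → Fin q) → ℝ :=
    fun μ n a => (μ (cyl e n a) : ℝ)
  have hKc : IsCompact (Set.univ.pi fun n : ℕ =>
      (Set.univ.pi fun _ : Fin n → Fin q => Icc (0:ℝ) 1)) :=
    isCompact_univ_pi fun n => isCompact_univ_pi fun _ => isCompact_Icc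
  have hmem : ∀ k, Φ (μs k) ∈ (Set.univ.pi fun n : ℕ =>
      (Set.univ.pi fun _ : Fin n → Fin q => Icc (0:ℝ) 1)) := by
    intro k
    rw [Set.mem_univ_pi]
    intro n
    rw [Set.mem_univ_pi]
    intro a
    exact ⟨(μs k (cyl e n a)).coe_nonneg,
      by exact_mod_cast ProbabilityMeasure.apply_le_one _ _⟩
  obtain ⟨ℓ, -, φ, hφ, hconv⟩ := hKc.tendsto_subseq hmem
  have hpt : ∀ n a, Tendsto (fun k => (μs (φ k) (cyl e n a) : ℝ)) atTop (𝓝 (ℓ n a)) := by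
    intro n a
    have h1 := tendsto_pi_nhds.mp hconv n
    exact tendsto_pi_nhds.mp h1 a
  have hℓ0 : ∀ n a, 0 ≤ ℓ n a := fun n a =>
    ge_of_tendsto' (hpt n a) fun k => (μs (φ k) (cyl e n a)).coe_nonneg
  set p : ∀ n : ℕ, (Fin n → Fin q) → ℝ≥0 := fun n a => (ℓ n a).toNNReal with hp
  have hptn : ∀ n a, Tendsto (fun k => μs (φ k) (cyl e n a)) atTop (𝓝 (p n a)) := by
    intro n a
    rw [← NNReal.tendsto_coe]
    simpa [hp, Real.coe_toNNReal _ (hℓ0 n a)] using hpt n a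
  have hcons : ∀ n (a : Fin n → Fin q), p n a = ∑ b : Fin q, p (n + 1) (Fin.snoc a b) := by
    intro n a
    have h2 : Tendsto (fun k => μs (φ k) (cyl e n a)) atTop
        (𝓝 (∑ b : Fin q, p (n + 1) (Fin.snoc a b))) := by
      have h3 := tendsto_finset_sum (Finset.univ : Finset (Fin q))
        (fun b _ => hptn (n + 1) (Fin.snoc a b))
      refine h3.congr fun k => ?_
      exact (probmeas_cyl_succ e (μs (φ k)) n a).symm
    exact tendsto_nhds_unique (hptn n a) h2
  have hp1 : ∀ a : Fin 0 → Fin q, p 0 a = 1 := by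
    intro a
    have h2 : Tendsto (fun k => μs (φ k) (cyl e 0 a)) atTop (𝓝 1) := by
      have : ∀ k, μs (φ k) (cyl e 0 a) = 1 := by
        intro k
        rw [cyl_zero]
        exact (μs (φ k)).coeFn_univ
      simpa [this] using tendsto_const_nhds
    exact tendsto_nhds_unique (hptn 0 a) h2
  obtain ⟨μL, hprob, hle⟩ := exists_limit_measure e hq hp1 hcons
  haveI : IsProbabilityMeasure μL := hprob
  let ν : ProbabilityMeasure (Conf d q) := ⟨μL, hprob⟩
  refine ⟨ν, φ, hφ, ?_⟩
  -- limsup over closed sets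
  have hclosed : ∀ F : Set (Conf d q), IsClosed F →
      (atTop.limsup fun k => (μs (φ k) : Measure (Conf d q)) F) ≤ μL F := by
    intro F hF
    have hFc : IsCompact F := hF.isCompact
    refine le_trans ?_ (hle F hFc)
    have hcoe : ((lam e p F : ℝ≥0) : ℝ≥0∞) = ⨅ n, ((stil e p n F : ℝ≥0) : ℝ≥0∞) := by
      rw [lam, ENNReal.coe_iInf]
    rw [hcoe]
    refine le_iInf fun n => ?_
    have hsub : F ⊆ ⋃ a ∈ touch e n F, cyl e n a := by
      intro x hx
      have hres : res e n x ∈ touch e n F := (mem_touch e).mpr ⟨x, hx, mem_cyl_res e n x⟩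
      exact Set.mem_biUnion hres (mem_cyl_res e n x)
    have hμk : ∀ k, (μs (φ k) : Measure (Conf d q)) F
        ≤ ∑ a ∈ touch e n F, (μs (φ k) : Measure (Conf d q)) (cyl e n a) :=
      fun k => (measure_mono hsub).trans (measure_biUnion_finset_le _ _)
    have hlim : Tendsto (fun k => ∑ a ∈ touch e n F,
        (μs (φ k) : Measure (Conf d q)) (cyl e n a)) atTop
        (𝓝 (∑ a ∈ touch e n F, ((p n a : ℝ≥0) : ℝ≥0∞))) := by
      refine tendsto_finset_sum _ fun a _ => ?_
      have := ENNReal.tendsto_coe.mpr (hptn n a)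
      refine this.congr fun k => ?_
      exact (ProbabilityMeasure.ennreal_coeFn_eq_coeFn_toMeasure (μs (φ k)) (cyl e n a))
    calc atTop.limsup (fun k => (μs (φ k) : Measure (Conf d q)) F)
        ≤ atTop.limsup (fun k => ∑ a ∈ touch e n F,
            (μs (φ k) : Measure (Conf d q)) (cyl e n a)) :=
          limsup_le_limsup (Eventually.of_forall hμk)
      _ = ∑ a ∈ touch e n F, ((p n a : ℝ≥0) : ℝ≥0∞) := hlim.limsup_eq
      _ = ((stil e p n F : ℝ≥0) : ℝ≥0∞) := by rw [stil]; push_cast; rfl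
  have hopens := (limsup_measure_closed_le_iff_liminf_measure_open_ge
    (μ := μL) (μs := fun k => (μs (φ k) : Measure (Conf d q)))).mp hclosed
  apply tendsto_of_forall_isOpen_le_liminf
  intro G hG
  have h1 : μL G ≤ atTop.liminf fun k => (μs (φ k) : Measure (Conf d q)) G := hopens G hG
  have aux : ((atTop.liminf fun k => μs (φ k) G : ℝ≥0) : ℝ≥0∞)
      = atTop.liminf fun k => ((μs (φ k) G : ℝ≥0) : ℝ≥0∞) := by
    refine Monotone.map_liminf_of_continuousAt (F := atTop) ENNReal.coe_mono
      (fun k => μs (φ k) G) ENNReal.continuous_coe.continuousAt ?_ ⟨0, by simp⟩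
    exact IsBoundedUnder.isCoboundedUnder_ge ⟨1, by
      simp only [eventually_map, eventually_atTop]
      exact ⟨0, fun k _ => ProbabilityMeasure.apply_le_one _ _⟩⟩
  have h2 : ((ν G : ℝ≥0) : ℝ≥0∞) ≤ ((atTop.liminf fun k => μs (φ k) G : ℝ≥0) : ℝ≥0∞) := by
    rw [aux, ProbabilityMeasure.ennreal_coeFn_eq_coeFn_toMeasure]
    refine le_trans h1 ?_
    refine liminf_le_liminf (Eventually.of_forall fun k => ?_)
    rw [ProbabilityMeasure.ennreal_coeFn_eq_coeFn_toMeasure]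
  exact_mod_cast h2


end Attractor

/-- discrete-time case of Theorem 2.3, abstract form.
If `T` is a continuous self-map of the space of Borel probability measures on `Ω`
(with the topology of weak convergence), `h` is a nonnegative lower semicontinuous
function which does not increase along `T` and strictly decreases whenever it is
positive, then the set of weak cluster points of the trajectory `(Tⁿν₀)` contains
a point where `h` vanishes. -/
theorem attractor_discrete (d q : ℕ) (hd : 1 ≤ d) (hq : 2 ≤ q)
    (T : ProbabilityMeasure (Conf d q) → ProbabilityMeasure (Conf d q))
    (hTcont : Continuous T)
    (h : ProbabilityMeasure (Conf d q) → ℝ)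
    (hnonneg : ∀ ν, 0 ≤ h ν)
    (hlsc : LowerSemicontinuous h)
    (hdecr : ∀ ν, h (T ν) ≤ h ν)
    (hstrict : ∀ ν, 0 < h ν → h (T ν) < h ν)
    (ν₀ : ProbabilityMeasure (Conf d q)) :
    ∃ νstar : ProbabilityMeasure (Conf d q),
      (∃ φ : ℕ → ℕ, StrictMono φ ∧
        Tendsto (fun k => T^[φ k] ν₀) atTop (𝓝 νstar)) ∧ h νstar = 0 := by
  have hq0 : 0 < q := by omega
  haveI : FirstCountableTopology (ProbabilityMeasure (Conf d q)) := by
    letI := TopologicalSpace.metrizableSpaceMetric (ProbabilityMeasure (Conf d q))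
    infer_instance
  set f : ℕ → ProbabilityMeasure (Conf d q) := fun n => T^[n] ν₀ with hf
  -- the set of cluster points of the trajectory
  set C : Set (ProbabilityMeasure (Conf d q)) := {ν | MapClusterPt ν atTop f} with hC
  have hmem_of_tendsto : ∀ {ν : ProbabilityMeasure (Conf d q)} {ψ : ℕ → ℕ}, StrictMono ψ →
      Tendsto (fun k => f (ψ k)) atTop (𝓝 ν) → ν ∈ C := by
    intro ν ψ hψ hconv
    exact MapClusterPt.of_comp hψ.tendsto_atTop hconv.mapClusterPt
  have hCclosed : IsClosed C := isClosed_setOf_clusterPt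
  have hCne : C.Nonempty := by
    obtain ⟨ν, ψ, hψ, hconv⟩ := Attractor.exists_conv_subseq hd hq0 f
    exact ⟨ν, hmem_of_tendsto hψ hconv⟩
  have hTC : ∀ ν ∈ C, T ν ∈ C := by
    intro ν hν
    obtain ⟨ψ, hψ, hconv⟩ := TopologicalSpace.FirstCountableTopology.tendsto_subseq hν
    have hψ' : StrictMono fun k => ψ k + 1 := fun a b hab => Nat.succ_lt_succ (hψ hab)
    refine hmem_of_tendsto hψ' ?_
    have := (hTcont.tendsto ν).comp hconv
    refine this.congr fun k => ?_
    simp only [Function.comp_apply, hf]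
    exact (Function.iterate_succ_apply' T (ψ k) ν₀).symm
  -- infimum of h over C
  set S : Set ℝ := h '' C with hS
  have hSne : S.Nonempty := hCne.image h
  have hSbdd : BddBelow S := ⟨0, by rintro x ⟨ν, -, rfl⟩; exact hnonneg ν⟩
  set L : ℝ := sInf S with hL
  have hL_le : ∀ ν ∈ C, L ≤ h ν := fun ν hν => csInf_le hSbdd ⟨ν, hν, rfl⟩
  have hL0 : 0 ≤ L := le_csInf hSne (by rintro x ⟨ν, -, rfl⟩; exact hnonneg ν)
  have hpick : ∀ i : ℕ, ∃ ν ∈ C, h ν < L + 1 / (i + 1) := by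
    intro i
    have hpos : (0:ℝ) < 1 / (i + 1) := by positivity
    obtain ⟨y, hy, hlt⟩ := exists_lt_of_csInf_lt hSne (lt_add_of_pos_right L hpos)
    obtain ⟨ν, hν, rfl⟩ := hy
    exact ⟨ν, hν, hlt⟩
  choose g hgC hglt using hpick
  obtain ⟨νstar, ψ, hψ, hgconv⟩ := Attractor.exists_conv_subseq hd hq0 g
  have hstar_mem : νstar ∈ C :=
    hCclosed.mem_of_tendsto hgconv (Eventually.of_forall fun k => hgC (ψ k))
  have hhconv : Tendsto (fun k => h (g (ψ k))) atTop (𝓝 L) := by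
    have hub : Tendsto (fun k => L + 1 / ((ψ k : ℝ) + 1)) atTop (𝓝 (L + 0)) := by
      refine tendsto_const_nhds.add ?_
      exact tendsto_one_div_add_atTop_nhds_zero_nat.comp hψ.tendsto_atTop
    rw [add_zero] at hub
    refine tendsto_of_tendsto_of_tendsto_of_le_of_le tendsto_const_nhds hub ?_ ?_
    · exact fun k => hL_le _ (hgC (ψ k))
    · exact fun k => (hglt (ψ k)).le
  have hhstar_le : h νstar ≤ L := by
    by_contra hlt
    push_neg at hlt
    set y := (L + h νstar) / 2 with hy
    have hy1 : L < y := by rw [hy]; linarith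
    have hy2 : y < h νstar := by rw [hy]; linarith
    have hev1 : ∀ᶠ x in 𝓝 νstar, y < h x := hlsc νstar y hy2
    have hev2 : ∀ᶠ k in atTop, y < h (g (ψ k)) := hgconv.eventually hev1
    have hev3 : ∀ᶠ k in atTop, h (g (ψ k)) < y := hhconv.eventually (Iio_mem_nhds hy1)
    obtain ⟨k, hk1, hk2⟩ := (hev2.and hev3).exists
    exact absurd (hk1.trans hk2) (lt_irrefl y)
  have hstar_eq : h νstar = L := le_antisymm hhstar_le (hL_le _ hstar_mem)
  have hL_eq : L = 0 := by
    by_contra hLne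
    have hLpos : 0 < L := lt_of_le_of_ne hL0 (Ne.symm hLne)
    have hpos : 0 < h νstar := by rw [hstar_eq]; exact hLpos
    have h1 : h (T νstar) < L := by
      have := hstrict νstar hpos
      rwa [hstar_eq] at this
    have h2 : L ≤ h (T νstar) := hL_le _ (hTC _ hstar_mem)
    linarith
  obtain ⟨φ, hφ, hconv⟩ := TopologicalSpace.FirstCountableTopology.tendsto_subseq hstar_mem
  exact ⟨νstar, ⟨φ, hφ, hconv⟩, by rw [hstar_eq, hL_eq]⟩
end

section
/- Let P denote the space of Borel probability measures on Ω with the topology of weak convergence. Let (T_t)_{t≥0} be a family of continuous maps P → P with T_0 = id and T_{s+t} = T_s ∘ T_t for all s,t ≥ 0, and let h : P → [0,∞) be lower semicontinuous with h(T_tν) ≤ h(ν) for all t ≥ 0 and all ν, and h(T_tν) < h(ν) for every t > 0 whenever h(ν) > 0. Then for every ν₀ ∈ P, the set C of all weak limits of sequences (T_{t_k}ν₀)_{k∈ℕ} with t_k → ∞ contains an element ν* with h(ν*) = 0. -/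
open MeasureTheory Filter Topology

open Set NNReal ENNReal

namespace AttractorAux

variable {d q : ℕ}

/-- Cylinder event determined by the coordinates `e 0, …, e n`. -/
def cyl (e : ℕ ≃ Zd d) (n : ℕ) (S : Set (Fin (n+1) → Fin q)) : Set (Conf d q) :=
  (fun (ω : Conf d q) (i : Fin (n+1)) => ω (e i.val)) ⁻¹' S

lemma continuous_res (e : ℕ ≃ Zd d) (n : ℕ) :
    Continuous (fun (ω : Conf d q) (i : Fin (n+1)) => ω (e i.val)) :=
  continuous_pi fun _ => continuous_apply _

lemma isOpen_cyl (e : ℕ ≃ Zd d) (n : ℕ) (S : Set (Fin (n+1) → Fin q)) :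
    IsOpen (cyl e n S) :=
  (isOpen_discrete S).preimage (continuous_res e n)

lemma isClosed_cyl (e : ℕ ≃ Zd d) (n : ℕ) (S : Set (Fin (n+1) → Fin q)) :
    IsClosed (cyl e n S) :=
  (isClosed_discrete S).preimage (continuous_res e n)

lemma measurableSet_cyl (e : ℕ ≃ Zd d) (n : ℕ) (S : Set (Fin (n+1) → Fin q)) :
    MeasurableSet (cyl e n S) :=
  (isOpen_cyl e n S).measurableSet

lemma mem_cyl (e : ℕ ≃ Zd d) {n : ℕ} {S : Set (Fin (n+1) → Fin q)} {ω : Conf d q} :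
    ω ∈ cyl e n S ↔ (fun (i : Fin (n+1)) => ω (e i.val)) ∈ S := Iff.rfl

@[simp] lemma cyl_univ (e : ℕ ≃ Zd d) (n : ℕ) : cyl e n (univ : Set (Fin (n+1) → Fin q)) = univ := rfl

@[simp] lemma cyl_empty (e : ℕ ≃ Zd d) (n : ℕ) : cyl e n (∅ : Set (Fin (n+1) → Fin q)) = ∅ := rfl

lemma cyl_inter (e : ℕ ≃ Zd d) (n : ℕ) (S T : Set (Fin (n+1) → Fin q)) :
    cyl e n (S ∩ T) = cyl e n S ∩ cyl e n T := rfl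

lemma cyl_union (e : ℕ ≃ Zd d) (n : ℕ) (S T : Set (Fin (n+1) → Fin q)) :
    cyl e n (S ∪ T) = cyl e n S ∪ cyl e n T := rfl

lemma cyl_compl (e : ℕ ≃ Zd d) (n : ℕ) (S : Set (Fin (n+1) → Fin q)) :
    cyl e n Sᶜ = (cyl e n S)ᶜ := rfl

lemma cyl_disjoint (e : ℕ ≃ Zd d) (n : ℕ) {S T : Set (Fin (n+1) → Fin q)}
    (h : Disjoint S T) : Disjoint (cyl e n S) (cyl e n T) := by
  rw [Set.disjoint_iff_inter_eq_empty] at h ⊢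
  rw [← cyl_inter, h, cyl_empty]

/-- Lift a set of words of length `n+1` to length `N+1`, `n ≤ N`. -/
def liftSet {n N : ℕ} (h : n ≤ N) (S : Set (Fin (n+1) → Fin q)) : Set (Fin (N+1) → Fin q) :=
  (fun (s : Fin (N+1) → Fin q) (i : Fin (n+1)) => s ⟨i.val, by omega⟩) ⁻¹' S

lemma cyl_liftSet (e : ℕ ≃ Zd d) {n N : ℕ} (h : n ≤ N) (S : Set (Fin (n+1) → Fin q)) :
    cyl e N (liftSet h S) = cyl e n S := rfl


lemma exists_cyl_nhds (e : ℕ ≃ Zd d) {G : Set (Conf d q)} (hG : IsOpen G)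
    {ω : Conf d q} (hω : ω ∈ G) :
    ∃ n S, ω ∈ cyl e n S ∧ cyl e n S ⊆ G := by
  obtain ⟨I, u, hu, hsub⟩ := isOpen_pi_iff.mp hG ω hω
  refine ⟨I.sup (fun z => e.symm z),
    {s | ∀ z ∈ I, ∀ (hz : e.symm z < I.sup (fun z => e.symm z) + 1), s ⟨e.symm z, hz⟩ = ω z},
    ?_, ?_⟩
  · intro z hz hz'
    simp [e.apply_symm_apply]
  · intro ω' hω'
    apply hsub
    intro z hz
    have hlt : e.symm z < I.sup (fun z => e.symm z) + 1 :=
      Nat.lt_succ_of_le (Finset.le_sup hz)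
    have := (mem_cyl e).mp hω' z hz hlt
    simp only at this
    have hz2 : ω' z = ω z := by
      have : ω' (e (e.symm z)) = ω z := this
      simpa [e.apply_symm_apply] using this
    rw [hz2]
    exact (hu z hz).2

lemma exists_cyl_between (e : ℕ ≃ Zd d) {K G : Set (Conf d q)} (hK : IsCompact K)
    (hG : IsOpen G) (hKG : K ⊆ G) :
    ∃ n S, K ⊆ cyl e n S ∧ cyl e n S ⊆ G := by
  classical
  have h1 : ∀ ω : Conf d q, ∃ n S, (ω ∈ G → ω ∈ cyl e n S) ∧ cyl e n S ⊆ G := by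
    intro ω
    by_cases hω : ω ∈ G
    · obtain ⟨n, S, h1, h2⟩ := exists_cyl_nhds e hG hω
      exact ⟨n, S, fun _ => h1, h2⟩
    · exact ⟨0, ∅, fun h => absurd h hω, by simp⟩
  choose n S hmem hsubG using h1
  obtain ⟨t, ht⟩ := hK.elim_finite_subcover (fun ω => cyl e (n ω) (S ω))
    (fun ω => isOpen_cyl e _ _)
    (fun ω hω => Set.mem_iUnion.mpr ⟨ω, hmem ω (hKG hω)⟩)
  set N := t.sup n with hN
  refine ⟨N, {s | cyl e N {s} ⊆ G}, ?_, ?_⟩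
  · intro ω' hω'
    obtain ⟨ω, hωt, hω'mem⟩ := Set.mem_iUnion₂.mp (ht hω')
    refine (mem_cyl e).mpr ?_
    intro ω'' hω''
    have heq : ∀ i : Fin (N+1), ω'' (e i.val) = ω' (e i.val) := by
      intro i
      exact congrFun (Set.mem_singleton_iff.mp hω'') i
    apply hsubG ω
    refine (mem_cyl e).mpr ?_
    have hle : n ω ≤ N := Finset.le_sup hωt
    have : (fun (i : Fin (n ω + 1)) => ω'' (e i.val))
        = (fun (i : Fin (n ω + 1)) => ω' (e i.val)) := by
      funext i
      exact heq ⟨i.val, by omega⟩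
    rw [this]
    exact (mem_cyl e).mp hω'mem
  · intro ω' hω'
    exact (mem_cyl e).mp hω' rfl

theorem exists_weak_limit (e : ℕ ≃ Zd d)
    (μs : ℕ → ProbabilityMeasure (Conf d q)) :
    ∃ (ν : ProbabilityMeasure (Conf d q)) (φ : ℕ → ℕ), StrictMono φ ∧
      Tendsto (fun k => μs (φ k)) atTop (𝓝 ν) := by
  classical
  set A := (Σ n : ℕ, Set (Fin (n+1) → Fin q)) with hA
  set x : ℕ → A → ℝ≥0 := fun k p => μs k (cyl e p.1 p.2) with hxdef
  have hcomp : IsCompact (Set.univ.pi (fun _ : A => Set.Icc (0:ℝ≥0) 1)) :=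
    isCompact_univ_pi fun _ => isCompact_Icc
  have hx : ∀ k, x k ∈ Set.univ.pi (fun _ : A => Set.Icc (0:ℝ≥0) 1) :=
    fun k p _ => ⟨zero_le, ProbabilityMeasure.apply_le_one _ _⟩
  obtain ⟨ℓ, hℓmem, φ, hφmono, hφconv⟩ := hcomp.tendsto_subseq hx
  have hp : ∀ p : A, Tendsto (fun k => x (φ k) p) atTop (𝓝 (ℓ p)) :=
    fun p => (tendsto_pi_nhds.mp hφconv) p
  have hℓ1 : ∀ p : A, ℓ p ≤ 1 := fun p => (hℓmem p (Set.mem_univ _)).2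
  set ν : ℕ → ProbabilityMeasure (Conf d q) := fun k => μs (φ k) with hν
  have hxk : ∀ (k : ℕ) (p : A), ((x (φ k) p : ℝ≥0) : ℝ≥0∞) = (ν k).toMeasure (cyl e p.1 p.2) :=
    fun k p => ProbabilityMeasure.ennreal_coeFn_eq_coeFn_toMeasure _ _
  have hℓcongr : ∀ p p' : A, cyl e p.1 p.2 = cyl e p'.1 p'.2 → ℓ p = ℓ p' := by
    intro p p' hpp
    refine tendsto_nhds_unique (hp p) ?_
    have heq : (fun k => x (φ k) p) = fun k => x (φ k) p' := by
      funext k; simp only [hxdef]; rw [hpp]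
    rw [heq]; exact hp p'
  have hℓsub : ∀ (n : ℕ) (S T : Set (Fin (n+1) → Fin q)),
      ℓ ⟨n, S ∪ T⟩ ≤ ℓ ⟨n, S⟩ + ℓ ⟨n, T⟩ := by
    intro n S T
    refine le_of_tendsto_of_tendsto' (hp ⟨n, S ∪ T⟩) ((hp ⟨n, S⟩).add (hp ⟨n, T⟩)) fun k => ?_
    have h2 : ((x (φ k) ⟨n, S ∪ T⟩ : ℝ≥0) : ℝ≥0∞)
        ≤ ((x (φ k) ⟨n, S⟩ : ℝ≥0) : ℝ≥0∞) + ((x (φ k) ⟨n, T⟩ : ℝ≥0) : ℝ≥0∞) := by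
      rw [hxk, hxk, hxk]
      exact (by rw [cyl_union] : (ν k).toMeasure (cyl e n (S ∪ T))
        = (ν k).toMeasure (cyl e n S ∪ cyl e n T)) ▸ measure_union_le _ _
    exact_mod_cast h2
  have hℓadd : ∀ (n : ℕ) (S T : Set (Fin (n+1) → Fin q)), Disjoint S T →
      ℓ ⟨n, S ∪ T⟩ = ℓ ⟨n, S⟩ + ℓ ⟨n, T⟩ := by
    intro n S T hST
    have heq : ∀ k, x (φ k) ⟨n, S ∪ T⟩ = x (φ k) ⟨n, S⟩ + x (φ k) ⟨n, T⟩ := by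
      intro k
      have h2 : ((x (φ k) ⟨n, S ∪ T⟩ : ℝ≥0) : ℝ≥0∞)
          = ((x (φ k) ⟨n, S⟩ : ℝ≥0) : ℝ≥0∞) + ((x (φ k) ⟨n, T⟩ : ℝ≥0) : ℝ≥0∞) := by
        rw [hxk, hxk, hxk, cyl_union]
        exact measure_union (cyl_disjoint e n hST) (measurableSet_cyl e n T)
      exact_mod_cast h2
    exact tendsto_nhds_unique ((hp ⟨n, S ∪ T⟩).congr heq) ((hp ⟨n, S⟩).add (hp ⟨n, T⟩))
  -- the limit candidate as an infimum over cylinder covers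
  set E : Set (Conf d q) → ℝ≥0∞ := fun Ks =>
    ⨅ (p : A) (_ : Ks ⊆ cyl e p.1 p.2), ((ℓ p : ℝ≥0) : ℝ≥0∞) with hEdef
  have hEcov : ∀ (Ks : Set (Conf d q)) (p : A), Ks ⊆ cyl e p.1 p.2 → E Ks ≤ (ℓ p : ℝ≥0∞) :=
    fun Ks p hc => iInf₂_le p hc
  have hE1 : ∀ Ks, E Ks ≤ 1 := by
    intro Ks
    refine (hEcov Ks ⟨0, Set.univ⟩ (by simp)).trans ?_
    exact_mod_cast hℓ1 ⟨0, Set.univ⟩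
  have hEtop : ∀ Ks, E Ks ≠ ∞ := fun Ks => ((hE1 Ks).trans_lt ENNReal.one_lt_top).ne
  have hEmono : ∀ {K1 K2 : Set (Conf d q)}, K1 ⊆ K2 → E K1 ≤ E K2 := by
    intro K1 K2 h
    exact le_iInf₂ fun p hc => hEcov K1 p (h.trans hc)
  have hEsup_le : ∀ K1 K2 : Set (Conf d q), E (K1 ∪ K2) ≤ E K1 + E K2 := by
    intro K1 K2
    have h1 : E K1 = ⨅ c : {p : A // K1 ⊆ cyl e p.1 p.2}, ((ℓ c.1 : ℝ≥0) : ℝ≥0∞) :=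
      (iInf_subtype (f := fun c : {p : A // K1 ⊆ cyl e p.1 p.2} => ((ℓ c.1 : ℝ≥0) : ℝ≥0∞))).symm ▸ rfl
    have h2 : E K2 = ⨅ c : {p : A // K2 ⊆ cyl e p.1 p.2}, ((ℓ c.1 : ℝ≥0) : ℝ≥0∞) :=
      (iInf_subtype (f := fun c : {p : A // K2 ⊆ cyl e p.1 p.2} => ((ℓ c.1 : ℝ≥0) : ℝ≥0∞))).symm ▸ rfl
    rw [h1, h2, ENNReal.iInf_add]
    refine le_iInf fun c1 => ?_
    rw [ENNReal.add_iInf]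
    refine le_iInf fun c2 => ?_
    obtain ⟨⟨n1, S1⟩, hc1⟩ := c1
    obtain ⟨⟨n2, S2⟩, hc2⟩ := c2
    set N := max n1 n2 with hNdef
    set T1 := liftSet (le_max_left n1 n2) S1 with hT1
    set T2 := liftSet (le_max_right n1 n2) S2 with hT2
    have hcov : K1 ∪ K2 ⊆ cyl e N (T1 ∪ T2) := by
      rw [cyl_union, hT1, hT2, cyl_liftSet, cyl_liftSet]
      exact Set.union_subset_union hc1 hc2
    refine (hEcov _ ⟨N, T1 ∪ T2⟩ hcov).trans ?_
    have hsub := hℓsub N T1 T2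
    have he1 : ℓ ⟨N, T1⟩ = ℓ ⟨n1, S1⟩ := hℓcongr _ _ (by rw [hT1, cyl_liftSet])
    have he2 : ℓ ⟨N, T2⟩ = ℓ ⟨n2, S2⟩ := hℓcongr _ _ (by rw [hT2, cyl_liftSet])
    rw [he1, he2] at hsub
    calc ((ℓ ⟨N, T1 ∪ T2⟩ : ℝ≥0) : ℝ≥0∞) ≤ ((ℓ ⟨n1, S1⟩ + ℓ ⟨n2, S2⟩ : ℝ≥0) : ℝ≥0∞) := by
          exact_mod_cast hsub
      _ = ((ℓ ⟨n1, S1⟩ : ℝ≥0) : ℝ≥0∞) + ((ℓ ⟨n2, S2⟩ : ℝ≥0) : ℝ≥0∞) := by push_cast; rfl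
  have hEadd : ∀ K1 K2 : Set (Conf d q), IsCompact K1 → IsClosed K2 → Disjoint K1 K2 →
      E K1 + E K2 ≤ E (K1 ∪ K2) := by
    intro K1 K2 hK1 hK2c hdis
    obtain ⟨n0, S0, hs1, hs2⟩ := exists_cyl_between e hK1 hK2c.isOpen_compl
      hdis.subset_compl_right
    refine le_iInf₂ fun p hcov => ?_
    obtain ⟨np, Sp⟩ := p
    set N := max np n0 with hNdef
    set T := liftSet (le_max_left np n0) Sp with hT
    set T0 := liftSet (le_max_right np n0) S0 with hT0
    have hcylT : cyl e N T = cyl e np Sp := by rw [hT, cyl_liftSet]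
    have hcylT0 : cyl e N T0 = cyl e n0 S0 := by rw [hT0, cyl_liftSet]
    have hc1 : K1 ⊆ cyl e N (T ∩ T0) := by
      rw [cyl_inter, hcylT, hcylT0]
      exact Set.subset_inter (Set.subset_union_left.trans hcov) hs1
    have hc2 : K2 ⊆ cyl e N (T ∩ T0ᶜ) := by
      rw [cyl_inter, cyl_compl, hcylT, hcylT0]
      refine Set.subset_inter (Set.subset_union_right.trans hcov) ?_
      intro ω hω hmem
      exact (hs2 hmem) hω
    have hdisj : Disjoint (T ∩ T0) (T ∩ T0ᶜ) :=
      disjoint_compl_right.mono Set.inter_subset_right Set.inter_subset_right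
    have hsum : ℓ ⟨N, T ∩ T0⟩ + ℓ ⟨N, T ∩ T0ᶜ⟩ = ℓ ⟨np, Sp⟩ := by
      rw [← hℓadd N _ _ hdisj]
      refine hℓcongr _ _ ?_
      rw [show (T ∩ T0) ∪ (T ∩ T0ᶜ) = T from Set.inter_union_compl T T0, hcylT]
    calc E K1 + E K2 ≤ ((ℓ ⟨N, T ∩ T0⟩ : ℝ≥0) : ℝ≥0∞) + ((ℓ ⟨N, T ∩ T0ᶜ⟩ : ℝ≥0) : ℝ≥0∞) :=
          add_le_add (hEcov _ _ hc1) (hEcov _ _ hc2)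
      _ = ((ℓ ⟨np, Sp⟩ : ℝ≥0) : ℝ≥0∞) := by rw [← ENNReal.coe_add, hsum]
  -- build the content and its measure
  let κ : Content (Conf d q) :=
    { toFun := fun K => (E ↑K).toNNReal
      mono' := fun K1 K2 h => ENNReal.toNNReal_mono (hEtop _) (hEmono h)
      sup_disjoint' := by
        intro K1 K2 hdis hcl1 hcl2
        have hEeq : E ↑(K1 ⊔ K2) = E ↑K1 + E ↑K2 := by
          rw [TopologicalSpace.Compacts.coe_sup]
          exact le_antisymm (hEsup_le _ _) (hEadd _ _ K1.2 hcl2 hdis)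
        show (E ↑(K1 ⊔ K2)).toNNReal = (E ↑K1).toNNReal + (E ↑K2).toNNReal
        rw [hEeq, ENNReal.toNNReal_add (hEtop _) (hEtop _)]
      sup_le' := by
        intro K1 K2
        have h := hEsup_le (↑K1) (↑K2)
        rw [← TopologicalSpace.Compacts.coe_sup] at h
        show (E ↑(K1 ⊔ K2)).toNNReal ≤ (E ↑K1).toNNReal + (E ↑K2).toNNReal
        calc (E ↑(K1 ⊔ K2)).toNNReal ≤ (E ↑K1 + E ↑K2).toNNReal :=
              ENNReal.toNNReal_mono (ENNReal.add_ne_top.mpr ⟨hEtop _, hEtop _⟩) h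
          _ = (E ↑K1).toNNReal + (E ↑K2).toNNReal := ENNReal.toNNReal_add (hEtop _) (hEtop _) }
  have hκcoe : ∀ K : TopologicalSpace.Compacts (Conf d q), (κ K : ℝ≥0∞) = E ↑K :=
    fun K => ENNReal.coe_toNNReal (hEtop _)
  have huniv : κ.measure Set.univ = 1 := by
    rw [Content.measure_apply _ MeasurableSet.univ,
        κ.outerMeasure_of_isOpen Set.univ isOpen_univ]
    show κ.innerContent ⟨Set.univ, isOpen_univ⟩ = 1
    rw [Content.innerContent]
    refine le_antisymm (iSup₂_le fun K _ => ?_) ?_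
    · rw [hκcoe]; exact hE1 _
    · refine le_iSup₂_of_le ⟨Set.univ, isCompact_univ⟩ (subset_refl _) ?_
      rw [hκcoe]
      refine le_iInf₂ fun p hcov => ?_
      have hce : cyl e p.1 p.2 = Set.univ := Set.eq_univ_of_univ_subset hcov
      have hl1 : ℓ p = 1 := by
        refine tendsto_nhds_unique (hp p) ?_
        have hconst : ∀ k, x (φ k) p = 1 := by
          intro k
          simp only [hxdef]
          rw [hce]
          exact (μs (φ k)).coeFn_univ
        exact tendsto_const_nhds.congr fun k => (hconst k).symm
      rw [hl1]
      simp
  have hprob : IsProbabilityMeasure κ.measure := ⟨huniv⟩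
  let νlim : ProbabilityMeasure (Conf d q) := ⟨κ.measure, hprob⟩
  have hopens : ∀ G : Set (Conf d q), IsOpen G →
      ((νlim G : ℝ≥0) : ℝ≥0∞) ≤ atTop.liminf (fun k => ((ν k G : ℝ≥0) : ℝ≥0∞)) := by
    intro G hG
    have h1 : ((νlim G : ℝ≥0) : ℝ≥0∞) = κ.measure G :=
      ProbabilityMeasure.ennreal_coeFn_eq_coeFn_toMeasure νlim G
    rw [h1, Content.measure_apply _ hG.measurableSet, κ.outerMeasure_of_isOpen G hG]
    show κ.innerContent ⟨G, hG⟩ ≤ _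
    rw [Content.innerContent]
    refine iSup₂_le fun K hKG => ?_
    obtain ⟨n, S, hc1, hc2⟩ := exists_cyl_between e K.2 hG hKG
    have h2 : (κ K : ℝ≥0∞) ≤ ((ℓ ⟨n, S⟩ : ℝ≥0) : ℝ≥0∞) := by
      rw [hκcoe]; exact hEcov _ ⟨n, S⟩ hc1
    refine h2.trans ?_
    have h3 : Tendsto (fun k => ((x (φ k) ⟨n, S⟩ : ℝ≥0) : ℝ≥0∞)) atTop
        (𝓝 ((ℓ ⟨n, S⟩ : ℝ≥0) : ℝ≥0∞)) := ENNReal.tendsto_coe.mpr (hp ⟨n, S⟩)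
    rw [← h3.liminf_eq]
    refine liminf_le_liminf (Eventually.of_forall fun k => ?_)
    rw [hxk, show ((ν k G : ℝ≥0) : ℝ≥0∞) = (ν k).toMeasure G from
      ProbabilityMeasure.ennreal_coeFn_eq_coeFn_toMeasure _ _]
    exact measure_mono hc2
  have key : Tendsto (fun k => ν k) atTop (𝓝 νlim) := by
    apply MeasureTheory.tendsto_of_forall_isOpen_le_liminf
    intro G hG
    have aux : ((atTop.liminf fun k => (ν k) G : ℝ≥0) : ℝ≥0∞)
        = atTop.liminf (fun k => ((ν k G : ℝ≥0) : ℝ≥0∞)) := by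
      refine Monotone.map_liminf_of_continuousAt (F := atTop) ENNReal.coe_mono
        (fun k => (ν k) G) ENNReal.continuous_coe.continuousAt ?_ ?_
      · exact IsBoundedUnder.isCoboundedUnder_ge ⟨1, by simp⟩
      · exact ⟨0, by simp⟩
    have h5 := hopens G hG
    rw [← aux] at h5
    exact_mod_cast h5
  exact ⟨νlim, φ, hφmono, key⟩

end AttractorAux

/-- continuous-time case of Theorem 2.3, abstract form.
If `(T_t)_{t ≥ 0}` is a semigroup of continuous self-maps of the space of Borel
probability measures on `Ω` (with the topology of weak convergence), and `h` is a
nonnegative lower semicontinuous function which does not increase along the semigroup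
and strictly decreases for positive times whenever it is positive, then the set of
weak limits of sequences `T_{t_k} ν₀` with `t_k → ∞` contains a point where `h`
vanishes. -/
theorem attractor_continuous (d q : ℕ) (hd : 1 ≤ d) (hq : 2 ≤ q)
    (T : ℝ → ProbabilityMeasure (Conf d q) → ProbabilityMeasure (Conf d q))
    (hT0 : T 0 = id)
    (hTsemi : ∀ s t : ℝ, 0 ≤ s → 0 ≤ t → T (s + t) = T s ∘ T t)
    (hTcont : ∀ t : ℝ, 0 ≤ t → Continuous (T t))
    (h : ProbabilityMeasure (Conf d q) → ℝ)
    (hnonneg : ∀ ν, 0 ≤ h ν)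
    (hlsc : LowerSemicontinuous h)
    (hdecr : ∀ (t : ℝ), 0 ≤ t → ∀ ν, h (T t ν) ≤ h ν)
    (hstrict : ∀ (t : ℝ), 0 < t → ∀ ν, 0 < h ν → h (T t ν) < h ν)
    (ν₀ : ProbabilityMeasure (Conf d q)) :
    ∃ νstar : ProbabilityMeasure (Conf d q),
      (∃ ts : ℕ → ℝ, Tendsto ts atTop atTop ∧
        Tendsto (fun k => T (ts k) ν₀) atTop (𝓝 νstar)) ∧ h νstar = 0 := by
  classical
  haveI : Nonempty (Fin d) := ⟨⟨0, hd⟩⟩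
  haveI : Infinite (Zd d) :=
    Infinite.of_injective (fun z : ℤ => (fun _ => z : Zd d))
      (fun a b hab => congrFun hab (Classical.arbitrary _))
  letI : Encodable (Zd d) := Encodable.ofCountable _
  letI : Denumerable (Zd d) := Denumerable.ofEncodableOfInfinite _
  let e : ℕ ≃ Zd d := (Denumerable.eqv (Zd d)).symm
  letI : MetricSpace (ProbabilityMeasure (Conf d q)) :=
    TopologicalSpace.metrizableSpaceMetric (ProbabilityMeasure (Conf d q))
  set L : Set (ProbabilityMeasure (Conf d q)) := {ν | ∃ ts : ℕ → ℝ, Tendsto ts atTop atTop ∧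
    Tendsto (fun k => T (ts k) ν₀) atTop (𝓝 ν)} with hL
  -- L is nonempty
  obtain ⟨ν₁, φ₁, hφ₁, hconv₁⟩ := AttractorAux.exists_weak_limit e (fun n => T (n : ℝ) ν₀)
  have hν₁L : ν₁ ∈ L := by
    refine ⟨fun k => ((φ₁ k : ℕ) : ℝ), ?_, hconv₁⟩
    exact tendsto_natCast_atTop_atTop.comp hφ₁.tendsto_atTop
  -- L is invariant
  have hLinv : ∀ ν ∈ L, ∀ s : ℝ, 0 ≤ s → T s ν ∈ L := by
    rintro ν ⟨ts, hts, hconv⟩ s hs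
    refine ⟨fun k => s + ts k, tendsto_atTop_add_const_left _ s hts, ?_⟩
    have hev : ∀ᶠ k in atTop, T s (T (ts k) ν₀) = T (s + ts k) ν₀ := by
      filter_upwards [hts.eventually_ge_atTop 0] with k hk
      rw [hTsemi s (ts k) hs hk]; rfl
    exact (((hTcont s hs).tendsto ν).comp hconv).congr' hev
  -- L is closed
  have hLclosed : IsClosed L := by
    refine IsSeqClosed.isClosed ?_
    intro xseq p hxL hxconv
    have hch : ∀ i : ℕ, ∃ t : ℝ, (i : ℝ) ≤ t ∧ dist (T t ν₀) (xseq i) < 1 / (i + 1) := by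
      intro i
      obtain ⟨ts, hts, hconv⟩ := hxL i
      have h1 : ∀ᶠ k in atTop, (i : ℝ) ≤ ts k := hts.eventually_ge_atTop _
      have hpos : (0:ℝ) < 1 / ((i : ℝ) + 1) := by positivity
      obtain ⟨N, hN⟩ := Metric.tendsto_atTop.mp hconv _ hpos
      have h2 : ∀ᶠ k in atTop, dist (T (ts k) ν₀) (xseq i) < 1 / ((i : ℝ) + 1) :=
        eventually_atTop.mpr ⟨N, hN⟩
      obtain ⟨k, hk1, hk2⟩ := (h1.and h2).exists
      exact ⟨ts k, hk1, hk2⟩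
    choose ts hts1 hts2 using hch
    refine ⟨ts, ?_, ?_⟩
    · exact tendsto_atTop_mono hts1 tendsto_natCast_atTop_atTop
    · rw [tendsto_iff_dist_tendsto_zero]
      have hb : ∀ i, dist (T (ts i) ν₀) p ≤ 1 / (i + 1) + dist (xseq i) p := fun i =>
        (dist_triangle _ (xseq i) p).trans (add_le_add (hts2 i).le le_rfl)
      have hlim : Tendsto (fun i : ℕ => 1 / ((i : ℝ) + 1) + dist (xseq i) p) atTop (𝓝 0) := by
        have := tendsto_one_div_add_atTop_nhds_zero_nat.add
          (tendsto_iff_dist_tendsto_zero.mp hxconv)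
        simpa using this
      exact squeeze_zero (fun i => dist_nonneg) hb hlim
  -- minimize h over L
  set c := sInf (h '' L) with hc
  have hbdd : BddBelow (h '' L) := ⟨0, by rintro y ⟨ν, -, rfl⟩; exact hnonneg ν⟩
  have hne : (h '' L).Nonempty := ⟨h ν₁, ν₁, hν₁L, rfl⟩
  have hcle : ∀ ν ∈ L, c ≤ h ν := fun ν hν => csInf_le hbdd ⟨ν, hν, rfl⟩
  have hch2 : ∀ i : ℕ, ∃ ν ∈ L, h ν < c + 1 / (i + 1) := by
    intro i
    have : c < c + 1 / (i + 1) := by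
      have : (0:ℝ) < 1 / (i + 1) := by positivity
      linarith
    obtain ⟨y, ⟨ν, hνL, rfl⟩, hy⟩ := (csInf_lt_iff hbdd hne).mp this
    exact ⟨ν, hνL, hy⟩
  choose σ hσL hσlt using hch2
  obtain ⟨νstar, ψ, hψ, hψconv⟩ := AttractorAux.exists_weak_limit e σ
  have hstarL : νstar ∈ L := hLclosed.isSeqClosed (fun k => hσL (ψ k)) hψconv
  have hstar_le : h νstar ≤ c := by
    by_contra hgt
    push_neg at hgt
    obtain ⟨y, hy1, hy2⟩ := exists_between hgt
    have h1 : ∀ᶠ k in atTop, y < h (σ (ψ k)) := hψconv.eventually (hlsc νstar y hy2)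
    have h2 : ∀ᶠ k in atTop, h (σ (ψ k)) < c + 1 / (k + 1) := by
      filter_upwards with k
      refine (hσlt (ψ k)).trans_le ?_
      have hk : (k : ℝ) ≤ (ψ k : ℝ) := by exact_mod_cast hψ.le_apply
      have : 1 / ((ψ k : ℝ) + 1) ≤ 1 / ((k : ℝ) + 1) := by
        apply one_div_le_one_div_of_le
        · positivity
        · linarith
      linarith
    have h3 : ∀ᶠ k : ℕ in atTop, c + 1 / ((k : ℝ) + 1) < y := by
      have hlim : Tendsto (fun k : ℕ => c + 1 / ((k : ℝ) + 1)) atTop (𝓝 c) := by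
        have : Tendsto (fun k : ℕ => 1 / ((k : ℝ) + 1)) atTop (𝓝 0) :=
          tendsto_one_div_add_atTop_nhds_zero_nat
        simpa using (tendsto_const_nhds (x := c)).add this
      exact hlim.eventually_lt_const hy1
    obtain ⟨k, hk1, hk2, hk3⟩ := (h1.and (h2.and h3)).exists
    linarith
  refine ⟨νstar, hstarL, ?_⟩
  rcases eq_or_lt_of_le (hnonneg νstar) with heq | hpos
  · exact heq.symm
  · exfalso
    have hT1 : T 1 νstar ∈ L := hLinv νstar hstarL 1 zero_le_one
    have := hcle _ hT1
    have hlt := hstrict 1 one_pos νstar hpos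
    have := hcle νstar hstarL
    linarith [hstar_le]
end

section
/- Let (c_Δ) be a translation-covariant Feller system of jump rates and Φ a translation-invariant potential with ‖Φ‖ < ∞. Then for every η ∈ Ω the series F_{L,Φ}(η) := Σ_{Δ∋0} (1/|Δ|) ∫ c_Δ(η,dζ_Δ) Σ_{A : A∩Δ≠∅} [Φ_A(ζ_Δη_{Δ^c}) − Φ_A(η)] converges absolutely, the partial sums over Δ contained in a finite set Δ̄ converge uniformly in η as Δ̄ increases to ℤ^d, and the function F_{L,Φ} : Ω → ℝ is continuous. Moreover ⟨ν,Φ⟩_L = ∫ F_{L,Φ} dν for every Borel probability measure ν on Ω. -/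
open MeasureTheory Filter Topology

variable {d q : ℕ}

/-- The shift `θ_i`, `(θ_i σ)(j) = σ(j+i)`. -/
def shift (i : Zd d) (σ : Conf d q) : Conf d q := fun j => σ (j + i)

/-- An interaction potential: a family `Φ_A : Ω → ℝ` indexed by finite `A ⊂ ℤ^d`. -/
abbrev Pot (d q : ℕ) := Finset (Zd d) → Conf d q → ℝ

/-- A translation-invariant potential: each `Φ_A` is continuous, depends only on the
coordinates in `A`, and `Φ_{A+i} = Φ_A ∘ θ_i`. -/
structure IsPotential (Φ : Pot d q) : Prop where
  continuous : ∀ A, Continuous (Φ A)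
  isLocal : ∀ (A : Finset (Zd d)) (σ τ : Conf d q), (∀ j ∈ A, σ j = τ j) → Φ A σ = Φ A τ
  shiftCov : ∀ (A : Finset (Zd d)) (i : Zd d) (σ : Conf d q),
    Φ (A.image (· + i)) σ = Φ A (shift i σ)

/-- sup norm `‖f‖_∞` of a function on the (compact) configuration space. -/
noncomputable def supnorm (f : Conf d q → ℝ) : ℝ := ⨆ σ, |f σ|

/-- Summability of `Σ_{A∋0} ‖Φ_A‖_∞` (finiteness of `‖Φ‖`). -/
def PNormSummable (Φ : Pot d q) : Prop :=
  Summable fun A : {A : Finset (Zd d) // (0 : Zd d) ∈ A} => supnorm (Φ A.1)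

/-- The norm `‖Φ‖ = Σ_{A∋0} ‖Φ_A‖_∞`. -/
noncomputable def pnorm (Φ : Pot d q) : ℝ :=
  ∑' A : {A : Finset (Zd d) // (0 : Zd d) ∈ A}, supnorm (Φ A.1)

/-- The norm `‖Φ‖₀ = Σ_{A∋0} |A|⁻¹ ‖Φ_A‖_∞`. -/
noncomputable def pnorm0 (Φ : Pot d q) : ℝ :=
  ∑' A : {A : Finset (Zd d) // (0 : Zd d) ∈ A}, (A.1.card : ℝ)⁻¹ * supnorm (Φ A.1)

/-- A translation-covariant Feller system of jump rates, modelled through the weights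
`c_Δ(η, {ζ_Δ})` of the finite Borel measures `c_Δ(η,·)` on the finite discrete space
`{1,…,q}^Δ`: `η ↦ c_Δ(η,·)` is (weakly) continuous, the family is shift-covariant,
and `Σ_{Δ∋0} c̄_Δ < ∞` where `c̄_Δ = sup_η c_Δ(η, {1,…,q}^Δ)`. -/
structure JumpRates (d q : ℕ) : Type where
  /-- the weight `c_Δ(η, {ζ_Δ})` -/
  c : (Δ : Finset (Zd d)) → Conf d q → (↥Δ → Fin q) → NNReal
  feller : ∀ (Δ : Finset (Zd d)) (ζ : Δ → Fin q), Continuous fun η => c Δ η ζ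
  shiftCov : ∀ (i : Zd d) (Δ : Finset (Zd d)) (η : Conf d q)
      (ζ : ↥(Δ.image (· + i)) → Fin q),
    c (Δ.image (· + i)) η ζ
      = c Δ (shift i η) (fun j => ζ ⟨j.1 + i, Finset.mem_image_of_mem _ j.2⟩)
  cbar_summable : Summable fun Δ : {Δ : Finset (Zd d) // (0 : Zd d) ∈ Δ} =>
    ⨆ η : Conf d q, ∑ ζ : ↥Δ.1 → Fin q, (c Δ.1 η ζ : ℝ)

/-- `c̄_Δ = sup_η c_Δ(η, {1,…,q}^Δ)`. -/
noncomputable def cbar (R : JumpRates d q) (Δ : Finset (Zd d)) : ℝ :=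
  ⨆ η : Conf d q, ∑ ζ : Δ → Fin q, (R.c Δ η ζ : ℝ)

/-- `Σ_{Δ∋0} c̄_Δ`. -/
noncomputable def cbarSum (R : JumpRates d q) : ℝ :=
  ∑' Δ : {Δ : Finset (Zd d) // (0 : Zd d) ∈ Δ}, cbar R Δ.1

/-- The configuration `ζ_Δ η_{Δ^c}`: equal to `ζ` on `Δ` and to `η` off `Δ`. -/
def patch (Δ : Finset (Zd d)) (ζ : Δ → Fin q) (η : Conf d q) : Conf d q :=
  fun j => if h : j ∈ Δ then ζ ⟨j, h⟩ else η j

/-- The `Δ`-term of the function `F_{L,Φ}`: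
`|Δ|⁻¹ ∫ c_Δ(η,dζ_Δ) Σ_{A∩Δ≠∅} [Φ_A(ζ_Δη_{Δ^c}) − Φ_A(η)]`. -/
noncomputable def termL (R : JumpRates d q) (Φ : Pot d q) (Δ : Finset (Zd d))
    (η : Conf d q) : ℝ :=
  (Δ.card : ℝ)⁻¹ * ∑ ζ : Δ → Fin q, (R.c Δ η ζ : ℝ) *
    ∑' A : {A : Finset (Zd d) // (A ∩ Δ).Nonempty}, (Φ A.1 (patch Δ ζ η) - Φ A.1 η)

/-- The function `F_{L,Φ}(η) = Σ_{Δ∋0} |Δ|⁻¹ ∫ c_Δ(η,dζ_Δ) Σ_{A∩Δ≠∅} [Φ_A(ζ_Δη_{Δ^c}) − Φ_A(η)]`. -/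
noncomputable def FL (R : JumpRates d q) (Φ : Pot d q) (η : Conf d q) : ℝ :=
  ∑' Δ : {Δ : Finset (Zd d) // (0 : Zd d) ∈ Δ}, termL R Φ Δ.1 η

/-- The pairing `⟨ν,Φ⟩_L`. -/
noncomputable def pairingL (R : JumpRates d q) (Φ : Pot d q) (ν : Measure (Conf d q)) : ℝ :=
  ∫ η, FL R Φ η ∂ν

-- auxiliary lemmas
lemma abs_le_supnorm {f : Conf d q → ℝ} (hf : Continuous f) (σ : Conf d q) :
    |f σ| ≤ supnorm f :=
  le_ciSup (isCompact_range hf.abs).bddAbove σ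

lemma supnorm_nonneg (f : Conf d q → ℝ) : 0 ≤ supnorm f :=
  Real.iSup_nonneg fun _ => abs_nonneg _

lemma shift_surjective (i : Zd d) : Function.Surjective (shift i : Conf d q → Conf d q) :=
  fun σ => ⟨shift (-i) σ, funext fun j => by simp [shift]⟩

lemma cont_shift (i : Zd d) : Continuous (shift i : Conf d q → Conf d q) :=
  continuous_pi fun j => continuous_apply (j + i)

lemma supnorm_image {Φ : Pot d q} (hΦ : IsPotential Φ) (A : Finset (Zd d)) (i : Zd d) :
    supnorm (Φ (A.image (· + i))) = supnorm (Φ A) := by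
  have h : (fun σ => |Φ (A.image (· + i)) σ|) = fun σ => |Φ A (shift i σ)| := by
    funext σ; rw [hΦ.shiftCov]
  unfold supnorm
  rw [h]
  exact (shift_surjective i).iSup_comp fun τ => |Φ A τ|

/-- translation equivalence between `{A // 0 ∈ A}` and `{A // j ∈ A}`. -/
def eJ (j : Zd d) : {A : Finset (Zd d) // (0 : Zd d) ∈ A} ≃ {A : Finset (Zd d) // j ∈ A} where
  toFun A := ⟨A.1.image (· + j), Finset.mem_image.2 ⟨0, A.2, zero_add j⟩⟩
  invFun B := ⟨B.1.image (· + (-j)), Finset.mem_image.2 ⟨j, B.2, add_neg_cancel j⟩⟩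
  left_inv A := Subtype.ext <| by
    show (A.1.image (· + j)).image (· + (-j)) = A.1
    rw [Finset.image_image]
    simp only [Function.comp_def, add_neg_cancel_right]
    exact Finset.image_id
  right_inv B := Subtype.ext <| by
    show (B.1.image (· + (-j))).image (· + j) = B.1
    rw [Finset.image_image]
    simp only [Function.comp_def, neg_add_cancel_right]
    exact Finset.image_id

lemma summable_J {Φ : Pot d q} (hΦ : IsPotential Φ) (hΦsum : PNormSummable Φ) (j : Zd d) :
    Summable fun B : {A : Finset (Zd d) // j ∈ A} => supnorm (Φ B.1) := by
  apply (Equiv.summable_iff (eJ j)).mp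
  have : ((fun B : {A : Finset (Zd d) // j ∈ A} => supnorm (Φ B.1)) ∘ eJ j)
      = fun A : {A : Finset (Zd d) // (0 : Zd d) ∈ A} => supnorm (Φ A.1) := by
    funext A; exact supnorm_image hΦ A.1 j
  rw [this]; exact hΦsum

lemma tsum_J {Φ : Pot d q} (hΦ : IsPotential Φ) (j : Zd d) :
    ∑' B : {A : Finset (Zd d) // j ∈ A}, supnorm (Φ B.1) = pnorm Φ := by
  rw [← Equiv.tsum_eq (eJ j) (fun B : {A : Finset (Zd d) // j ∈ A} => supnorm (Φ B.1))]
  unfold pnorm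
  exact tsum_congr fun A => supnorm_image hΦ A.1 j

lemma key_summable {Φ : Pot d q} (hΦ : IsPotential Φ) (hΦsum : PNormSummable Φ)
    (Δ : Finset (Zd d)) :
    Summable (fun A : {A : Finset (Zd d) // (A ∩ Δ).Nonempty} => supnorm (Φ A.1)) ∧
    ∑' A : {A : Finset (Zd d) // (A ∩ Δ).Nonempty}, supnorm (Φ A.1)
      ≤ (Δ.card : ℝ) * pnorm Φ := by
  classical
  set g : Finset (Zd d) → ℝ := fun A => supnorm (Φ A) with hg
  have hg0 : ∀ A, 0 ≤ g A := fun A => supnorm_nonneg _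
  set U : Set (Finset (Zd d)) := {A | (A ∩ Δ).Nonempty} with hU
  have hSj : ∀ j : Zd d, Summable ({A : Finset (Zd d) | j ∈ A}.indicator g) := by
    intro j
    exact summable_subtype_iff_indicator.mp (summable_J hΦ hΦsum j)
  have hptw : ∀ A, U.indicator g A ≤ ∑ j ∈ Δ, ({A' : Finset (Zd d) | j ∈ A'}).indicator g A := by
    intro A
    by_cases hA : (A ∩ Δ).Nonempty
    · obtain ⟨j, hj⟩ := id hA
      have hjA : j ∈ A := (Finset.mem_inter.mp hj).1
      have hjΔ : j ∈ Δ := (Finset.mem_inter.mp hj).2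
      rw [Set.indicator_of_mem (show A ∈ U from hA)]
      calc g A = ({A' : Finset (Zd d) | j ∈ A'}).indicator g A :=
              (Set.indicator_of_mem (show A ∈ {A' : Finset (Zd d) | j ∈ A'} from hjA) g).symm
        _ ≤ _ := Finset.single_le_sum
              (f := fun i => ({A' : Finset (Zd d) | i ∈ A'}).indicator g A)
              (fun i _ => Set.indicator_nonneg (fun a _ => hg0 a) A) hjΔ
    · rw [Set.indicator_of_notMem (show A ∉ U from hA)]
      exact Finset.sum_nonneg fun i _ => Set.indicator_nonneg (fun a _ => hg0 a) A
  have hsum2 : Summable fun A => ∑ j ∈ Δ, ({A' : Finset (Zd d) | j ∈ A'}).indicator g A :=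
    summable_sum fun j _ => hSj j
  have hUsum : Summable (U.indicator g) :=
    Summable.of_nonneg_of_le (fun A => Set.indicator_nonneg (fun a _ => hg0 a) A) hptw hsum2
  have hsub : Summable (fun A : {A : Finset (Zd d) // (A ∩ Δ).Nonempty} => supnorm (Φ A.1)) :=
    summable_subtype_iff_indicator.mpr hUsum
  refine ⟨hsub, ?_⟩
  have h1 : ∑' A : {A : Finset (Zd d) // (A ∩ Δ).Nonempty}, supnorm (Φ A.1)
      = ∑' A, U.indicator g A := tsum_subtype U g
  rw [h1]
  calc ∑' A, U.indicator g A
      ≤ ∑' A, ∑ j ∈ Δ, ({A' : Finset (Zd d) | j ∈ A'}).indicator g A :=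
        Summable.tsum_le_tsum hptw hUsum hsum2
    _ = ∑ j ∈ Δ, ∑' A, ({A' : Finset (Zd d) | j ∈ A'}).indicator g A :=
        Summable.tsum_finsetSum fun j _ => hSj j
    _ = ∑ j ∈ Δ, pnorm Φ := by
        refine Finset.sum_congr rfl fun j _ => ?_
        rw [← tsum_subtype {A' : Finset (Zd d) | j ∈ A'} g]
        exact tsum_J hΦ j
    _ = (Δ.card : ℝ) * pnorm Φ := by rw [Finset.sum_const, nsmul_eq_mul]

section Lemmas
variable {R : JumpRates d q} {Φ : Pot d q}

lemma diff_abs_le (hΦ : IsPotential Φ) (A : Finset (Zd d)) (σ τ : Conf d q) :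
    |Φ A σ - Φ A τ| ≤ 2 * supnorm (Φ A) :=
  calc |Φ A σ - Φ A τ| ≤ |Φ A σ| + |Φ A τ| := abs_sub _ _
    _ ≤ supnorm (Φ A) + supnorm (Φ A) :=
      add_le_add (abs_le_supnorm (hΦ.continuous A) σ) (abs_le_supnorm (hΦ.continuous A) τ)
    _ = 2 * supnorm (Φ A) := (two_mul _).symm

lemma summable_diff (hΦ : IsPotential Φ) (hΦsum : PNormSummable Φ)
    (Δ : Finset (Zd d)) (σ τ : Conf d q) :
    Summable fun A : {A : Finset (Zd d) // (A ∩ Δ).Nonempty} => |Φ A.1 σ - Φ A.1 τ| :=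
  Summable.of_nonneg_of_le (fun A => abs_nonneg _)
    (fun A => diff_abs_le hΦ A.1 σ τ)
    ((key_summable hΦ hΦsum Δ).1.mul_left 2)

lemma inner_abs_le (hΦ : IsPotential Φ) (hΦsum : PNormSummable Φ)
    (Δ : Finset (Zd d)) (σ τ : Conf d q) :
    |∑' A : {A : Finset (Zd d) // (A ∩ Δ).Nonempty}, (Φ A.1 σ - Φ A.1 τ)|
      ≤ 2 * ((Δ.card : ℝ) * pnorm Φ) := by
  have hs := summable_diff hΦ hΦsum Δ σ τ
  have hs' : Summable fun A : {A : Finset (Zd d) // (A ∩ Δ).Nonempty} =>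
      ‖Φ A.1 σ - Φ A.1 τ‖ := by simpa only [Real.norm_eq_abs] using hs
  have h1 : ‖∑' A : {A : Finset (Zd d) // (A ∩ Δ).Nonempty}, (Φ A.1 σ - Φ A.1 τ)‖
      ≤ ∑' A : {A : Finset (Zd d) // (A ∩ Δ).Nonempty}, ‖Φ A.1 σ - Φ A.1 τ‖ :=
    norm_tsum_le_tsum_norm hs'
  simp only [Real.norm_eq_abs] at h1
  calc |∑' A : {A : Finset (Zd d) // (A ∩ Δ).Nonempty}, (Φ A.1 σ - Φ A.1 τ)|
      ≤ ∑' A : {A : Finset (Zd d) // (A ∩ Δ).Nonempty}, |Φ A.1 σ - Φ A.1 τ| := h1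
    _ ≤ ∑' A : {A : Finset (Zd d) // (A ∩ Δ).Nonempty}, 2 * supnorm (Φ A.1) :=
        Summable.tsum_le_tsum (fun A => diff_abs_le hΦ A.1 σ τ) hs
          ((key_summable hΦ hΦsum Δ).1.mul_left 2)
    _ = 2 * ∑' A : {A : Finset (Zd d) // (A ∩ Δ).Nonempty}, supnorm (Φ A.1) := tsum_mul_left
    _ ≤ 2 * ((Δ.card : ℝ) * pnorm Φ) := by
        have := (key_summable hΦ hΦsum Δ).2
        linarith

lemma cont_csum (R : JumpRates d q) (Δ : Finset (Zd d)) :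
    Continuous fun η : Conf d q => ∑ ζ : Δ → Fin q, (R.c Δ η ζ : ℝ) :=
  continuous_finset_sum _ fun ζ _ => NNReal.continuous_coe.comp (R.feller Δ ζ)

lemma csum_le_cbar (R : JumpRates d q) (Δ : Finset (Zd d)) (η : Conf d q) :
    ∑ ζ : Δ → Fin q, (R.c Δ η ζ : ℝ) ≤ cbar R Δ :=
  le_ciSup (isCompact_range (cont_csum R Δ)).bddAbove η

lemma cbar_nonneg (R : JumpRates d q) (Δ : Finset (Zd d)) : 0 ≤ cbar R Δ :=
  Real.iSup_nonneg fun η => Finset.sum_nonneg fun ζ _ => (R.c Δ η ζ).coe_nonneg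

lemma termL_abs_le (hΦ : IsPotential Φ) (hΦsum : PNormSummable Φ)
    {Δ : Finset (Zd d)} (hΔ : (0 : Zd d) ∈ Δ) (η : Conf d q) :
    |termL R Φ Δ η| ≤ 2 * pnorm Φ * cbar R Δ := by
  have hcard : (0 : ℝ) < (Δ.card : ℝ) := by
    exact_mod_cast Finset.card_pos.mpr ⟨0, hΔ⟩
  have hpn : 0 ≤ pnorm Φ := tsum_nonneg fun A => supnorm_nonneg _
  have h1 : |termL R Φ Δ η| ≤ (Δ.card : ℝ)⁻¹ *
      ∑ ζ : Δ → Fin q, (R.c Δ η ζ : ℝ) * (2 * ((Δ.card : ℝ) * pnorm Φ)) := by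
    rw [termL, abs_mul, abs_of_nonneg (inv_nonneg.2 hcard.le)]
    refine mul_le_mul_of_nonneg_left ?_ (inv_nonneg.2 hcard.le)
    calc |∑ ζ : Δ → Fin q, (R.c Δ η ζ : ℝ) *
          ∑' A : {A : Finset (Zd d) // (A ∩ Δ).Nonempty}, (Φ A.1 (patch Δ ζ η) - Φ A.1 η)|
        ≤ ∑ ζ : Δ → Fin q, |(R.c Δ η ζ : ℝ) *
          ∑' A : {A : Finset (Zd d) // (A ∩ Δ).Nonempty}, (Φ A.1 (patch Δ ζ η) - Φ A.1 η)| :=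
          Finset.abs_sum_le_sum_abs _ _
      _ ≤ ∑ ζ : Δ → Fin q, (R.c Δ η ζ : ℝ) * (2 * ((Δ.card : ℝ) * pnorm Φ)) := by
          refine Finset.sum_le_sum fun ζ _ => ?_
          rw [abs_mul, abs_of_nonneg (R.c Δ η ζ).coe_nonneg]
          exact mul_le_mul_of_nonneg_left (inner_abs_le hΦ hΦsum Δ _ _) (R.c Δ η ζ).coe_nonneg
  calc |termL R Φ Δ η|
      ≤ (Δ.card : ℝ)⁻¹ * ∑ ζ : Δ → Fin q, (R.c Δ η ζ : ℝ) * (2 * ((Δ.card : ℝ) * pnorm Φ)) := h1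
    _ = (∑ ζ : Δ → Fin q, (R.c Δ η ζ : ℝ)) * (2 * pnorm Φ) * ((Δ.card : ℝ)⁻¹ * (Δ.card : ℝ)) := by
        rw [← Finset.sum_mul]; ring
    _ = (∑ ζ : Δ → Fin q, (R.c Δ η ζ : ℝ)) * (2 * pnorm Φ) := by
        rw [inv_mul_cancel₀ hcard.ne', mul_one]
    _ ≤ cbar R Δ * (2 * pnorm Φ) :=
        mul_le_mul_of_nonneg_right (csum_le_cbar R Δ η) (by positivity)
    _ = 2 * pnorm Φ * cbar R Δ := by ring

lemma cont_patch (Δ : Finset (Zd d)) (ζ : Δ → Fin q) :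
    Continuous fun η : Conf d q => patch Δ ζ η := by
  refine continuous_pi fun j => ?_
  unfold patch
  by_cases h : j ∈ Δ
  · simp only [dif_pos h]; exact continuous_const
  · simp only [dif_neg h]; exact continuous_apply j

lemma cont_termL (hΦ : IsPotential Φ) (hΦsum : PNormSummable Φ)
    (R : JumpRates d q) (Δ : Finset (Zd d)) :
    Continuous (termL R Φ Δ) := by
  unfold termL
  refine continuous_const.mul (continuous_finset_sum _ fun ζ _ => ?_)
  refine (NNReal.continuous_coe.comp (R.feller Δ ζ)).mul ?_
  refine continuous_tsum (u := fun A : {A : Finset (Zd d) // (A ∩ Δ).Nonempty} =>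
    2 * supnorm (Φ A.1)) (fun A => ?_) ((key_summable hΦ hΦsum Δ).1.mul_left 2)
    (fun A η => diff_abs_le hΦ A.1 _ _)
  exact ((hΦ.continuous A.1).comp (cont_patch Δ ζ)).sub (hΦ.continuous A.1)

end Lemmas

/-- continuity of `F_{L,Φ}`, from the proof of Theorem 2.4.
For a translation-covariant Feller system of jump rates and a translation-invariant
potential with `‖Φ‖ < ∞`, the series defining `F_{L,Φ}` converges absolutely, its
partial sums over `Δ ⊆ Δ̄` converge uniformly as `Δ̄ ↑ ℤ^d`, `F_{L,Φ}` is continuous,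
and `⟨ν,Φ⟩_L = ∫ F_{L,Φ} dν` for every Borel probability measure `ν`. -/
theorem FL_continuous (hd : 1 ≤ d) (hq : 2 ≤ q)
    (R : JumpRates d q) (Φ : Pot d q) (hΦ : IsPotential Φ) (hΦsum : PNormSummable Φ) :
    (∀ (η : Conf d q) (Δ : {Δ : Finset (Zd d) // (0 : Zd d) ∈ Δ}) (ζ : ↥Δ.1 → Fin q),
      Summable fun A : {A : Finset (Zd d) // (A ∩ Δ.1).Nonempty} =>
        |Φ A.1 (patch Δ.1 ζ η) - Φ A.1 η|) ∧
    (∀ η : Conf d q,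
      Summable fun Δ : {Δ : Finset (Zd d) // (0 : Zd d) ∈ Δ} => |termL R Φ Δ.1 η|) ∧
    TendstoUniformly
      (fun (B : Finset (Zd d)) (η : Conf d q) =>
        ∑ Δ ∈ B.powerset.filter (fun Δ => (0 : Zd d) ∈ Δ), termL R Φ Δ η)
      (FL R Φ) atTop ∧
    Continuous (FL R Φ) ∧
    (∀ ν : Measure (Conf d q), IsProbabilityMeasure ν →
      pairingL R Φ ν = ∫ η, FL R Φ η ∂ν) := by
  classical
  set M : {Δ : Finset (Zd d) // (0 : Zd d) ∈ Δ} → ℝ :=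
    fun Δ => 2 * pnorm Φ * cbar R Δ.1 with hMdef
  have hMsum : Summable M := R.cbar_summable.mul_left (2 * pnorm Φ)
  have hpn : 0 ≤ pnorm Φ := tsum_nonneg fun A => supnorm_nonneg _
  have hM0 : ∀ Δ, 0 ≤ M Δ := fun Δ =>
    mul_nonneg (by positivity) (cbar_nonneg R Δ.1)
  have hbound : ∀ (η : Conf d q) (Δ : {Δ : Finset (Zd d) // (0 : Zd d) ∈ Δ}),
      |termL R Φ Δ.1 η| ≤ M Δ := fun η Δ => termL_abs_le hΦ hΦsum Δ.2 η
  have habs : ∀ η : Conf d q,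
      Summable fun Δ : {Δ : Finset (Zd d) // (0 : Zd d) ∈ Δ} => |termL R Φ Δ.1 η| :=
    fun η => Summable.of_nonneg_of_le (fun _ => abs_nonneg _) (hbound η) hMsum
  have hterm : ∀ η : Conf d q,
      Summable fun Δ : {Δ : Finset (Zd d) // (0 : Zd d) ∈ Δ} => termL R Φ Δ.1 η :=
    fun η => (habs η).of_abs
  refine ⟨fun η Δ ζ => summable_diff hΦ hΦsum Δ.1 _ _, habs, ?_, ?_, fun ν _ => rfl⟩
  · -- uniform convergence
    rw [Metric.tendstoUniformly_iff]
    intro ε hε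
    obtain ⟨T₀, hT₀⟩ := Metric.tendsto_atTop.mp hMsum.hasSum ε hε
    have e2 := Summable.sum_add_tsum_subtype_compl hMsum T₀
    have htail : ∑' x : {x // x ∉ T₀}, M x < ε := by
      have h := hT₀ T₀ le_rfl
      rw [Real.dist_eq] at h
      have h' := abs_lt.mp h
      linarith [h'.1, h'.2]
    filter_upwards [eventually_ge_atTop (T₀.sup (fun x => x.1))] with B hB
    intro η
    have hps : ∑ Δ ∈ B.powerset.filter (fun Δ => (0 : Zd d) ∈ Δ), termL R Φ Δ η
        = ∑ x ∈ B.powerset.subtype (fun Δ => (0 : Zd d) ∈ Δ), termL R Φ x.1 η :=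
      (Finset.sum_subtype_eq_sum_filter _).symm
    set T := B.powerset.subtype (fun Δ => (0 : Zd d) ∈ Δ) with hTdef
    have hT₀T : T₀ ⊆ T := by
      intro x hx
      rw [hTdef, Finset.mem_subtype, Finset.mem_powerset]
      exact (Finset.le_sup (f := fun x : {Δ : Finset (Zd d) // (0 : Zd d) ∈ Δ} => x.1) hx).trans hB
    have key := Summable.sum_add_tsum_subtype_compl (hterm η) T
    have e1 := Summable.sum_add_tsum_subtype_compl hMsum T
    have e3 : ∑ x ∈ T₀, M x ≤ ∑ x ∈ T, M x :=
      Finset.sum_le_sum_of_subset_of_nonneg hT₀T fun x _ _ => hM0 x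
    -- bound the tail of termL by the tail of M
    have hsub : Summable fun x : {x // x ∉ T} => |termL R Φ (x.1).1 η| := (habs η).subtype _
    have hsub' : Summable fun x : {x // x ∉ T} => ‖termL R Φ (x.1).1 η‖ := by
      simpa only [Real.norm_eq_abs] using hsub
    have h2 : |∑' x : {x // x ∉ T}, termL R Φ (x.1).1 η| ≤ ∑' x : {x // x ∉ T}, M x.1 := by
      have hn : ‖∑' x : {x // x ∉ T}, termL R Φ (x.1).1 η‖
          ≤ ∑' x : {x // x ∉ T}, ‖termL R Φ (x.1).1 η‖ := norm_tsum_le_tsum_norm hsub'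
      simp only [Real.norm_eq_abs] at hn
      refine hn.trans (Summable.tsum_le_tsum (fun x => hbound η x.1) hsub (hMsum.subtype _))
    rw [hps, Real.dist_eq]
    have hFL : FL R Φ η - ∑ x ∈ T, termL R Φ x.1 η = ∑' x : {x // x ∉ T}, termL R Φ (x.1).1 η := by
      rw [FL] at *
      linarith [key]
    rw [hFL]
    calc |∑' x : {x // x ∉ T}, termL R Φ (x.1).1 η| ≤ ∑' x : {x // x ∉ T}, M x.1 := h2
      _ ≤ ∑' x : {x // x ∉ T₀}, M x.1 := by linarith
      _ < ε := htail
  · -- continuity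
    unfold FL
    refine continuous_tsum (fun Δ => cont_termL hΦ hΦsum R Δ.1) hMsum fun Δ η => ?_
    rw [Real.norm_eq_abs]
    exact hbound η Δ
end

section
/- Fix an integer d ≥ 1, let Ω± = {−1,+1}^{ℤ^d}, and for t > 0 define p_t(s,s') := (1+e^{−2t})/2 if s' = s and (1−e^{−2t})/2 if s' = −s. Given any Borel probability measure ν₀ on Ω±, let ν_t be the unique Borel probability measure with ν_t([η_Λ]) = ∫ ν₀(dσ) Π_{i∈Λ} p_t(σ_i, η_i) for every finite Λ and η_Λ. Then: (i) for ν_t-almost every η and both a ∈ {−1,+1}, (1−e^{−2t})/2 ≤ ν_t({σ : σ(0)=a} | F_{ℤ^d∖{0}})(η) ≤ (1+e^{−2t})/2; (ii) consequently, defining r_t(η) := ν_t({σ : σ(0)=−η(0)} | F_{ℤ^d∖{0}})(η) / ν_t({σ : σ(0)=η(0)} | F_{ℤ^d∖{0}})(η), one has (1−e^{−2t})/(1+e^{−2t}) ≤ r_t(η) ≤ (1+e^{−2t})/(1−e^{−2t}) for ν_t-almost every η; and (iii) ∫ log r_t(η) ν_t(dη) → 0 as t → ∞. -/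
open MeasureTheory Filter Topology
open scoped ENNReal NNReal symmDiff

/-- The configuration space `Ω± = {−1,+1}^{ℤ^d}`, spins encoded as `Bool`
(`true ↔ +1`, `false ↔ −1`, so that `−s` is `!s`). -/
abbrev SpinConf (d : ℕ) := Zd d → Bool

variable {d : ℕ}

/-- The single-site transition probabilities of independent rate-1 spin flips:
`p_t(s,s') = (1+e^{−2t})/2` if `s' = s` and `(1−e^{−2t})/2` if `s' = −s`. -/
noncomputable def pflip (t : ℝ) (s s' : Bool) : ℝ :=
  if s' = s then (1 + Real.exp (-2 * t)) / 2 else (1 - Real.exp (-2 * t)) / 2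

/-- The cylinder set `[η_Λ] = {σ : σ|_Λ = η_Λ}`. -/
def cylB (Λ : Finset (Zd d)) (ω : ↥Λ → Bool) : Set (SpinConf d) :=
  {σ | ∀ j : Λ, σ j = ω j}

/-- `F_S`: the σ-algebra on `Ω±` generated by the coordinates in `S ⊂ ℤ^d`. -/
def cylSigmaB (S : Set (Zd d)) : MeasurableSpace (SpinConf d) :=
  MeasurableSpace.comap (fun σ => S.restrict σ) MeasurableSpace.pi

/-- A version of the conditional probability `ν({σ : σ(0)=a} | F_S)`. -/
noncomputable def condProbB (ν : Measure (SpinConf d)) (a : Bool) (S : Set (Zd d)) :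
    SpinConf d → ℝ :=
  ν[({σ : SpinConf d | σ (0 : Zd d) = a}).indicator fun _ => (1 : ℝ) | cylSigmaB S]

/-- `ν` is non-null with constant `δ > 0`. -/
def NonNullB (ν : Measure (SpinConf d)) (δ : ℝ) : Prop :=
  ∀ a : Bool, ∀ᵐ η ∂ν, δ ≤ condProbB ν a ({(0 : Zd d)}ᶜ : Set (Zd d)) η

/-- `νt` is `ν0` evolved by independent rate-1 spin flips for time `t`:
`ν_t([η_Λ]) = ∫ ν₀(dσ) Π_{i∈Λ} p_t(σ_i, η_i)` for all cylinders. -/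
def IsFlipEvolved (ν0 νt : Measure (SpinConf d)) (t : ℝ) : Prop :=
  ∀ (Λ : Finset (Zd d)) (ω : ↥Λ → Bool),
    νt (cylB Λ ω) = ENNReal.ofReal (∫ σ, ∏ i : ↥Λ, pflip t (σ i) (ω i) ∂ν0)

/-- The ratio `r_t(η) = ν_t({σ(0) = −η(0)} | F_{ℤ^d∖{0}})(η) / ν_t({σ(0) = η(0)} | F_{ℤ^d∖{0}})(η)`. -/
noncomputable def flipRatio (ν : Measure (SpinConf d)) (η : SpinConf d) : ℝ :=
  condProbB ν (!(η (0 : Zd d))) ({(0 : Zd d)}ᶜ : Set (Zd d)) η /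
    condProbB ν (η (0 : Zd d)) ({(0 : Zd d)}ᶜ : Set (Zd d)) η

namespace FlipAux

def res (Λ : Finset (Zd d)) (σ : SpinConf d) : ↥Λ → Bool := fun j => σ j

lemma measurable_res (Λ : Finset (Zd d)) : Measurable (res (d := d) Λ) :=
  measurable_pi_lambda _ fun j => measurable_pi_apply _

lemma cylB_eq_preimage (Λ : Finset (Zd d)) (ω : ↥Λ → Bool) :
    cylB Λ ω = res Λ ⁻¹' {ω} := by
  ext σ
  simp [cylB, res, funext_iff]

lemma measurableSet_cylB (Λ : Finset (Zd d)) (ω : ↥Λ → Bool) :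
    MeasurableSet (cylB Λ ω) := by
  rw [cylB_eq_preimage]
  exact measurable_res Λ (MeasurableSet.of_discrete)

lemma cylSigmaB_le (S : Set (Zd d)) :
    cylSigmaB S ≤ (inferInstance : MeasurableSpace (SpinConf d)) :=
  (measurable_pi_lambda _ fun j => measurable_pi_apply _ :
    Measurable fun σ : SpinConf d => S.restrict σ).comap_le

def Gset (d : ℕ) : Set (Set (SpinConf d)) :=
  {B | ∃ i : Zd d, i ≠ 0 ∧ ∃ C : Set Bool, B = (fun σ : SpinConf d => σ i) ⁻¹' C}

lemma cylSigmaB_eq_iSup (S : Set (Zd d)) : cylSigmaB S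
    = ⨆ j : ↥S, MeasurableSpace.comap (fun σ : SpinConf d => σ (j : Zd d)) inferInstance := by
  rw [cylSigmaB]
  rw [show (MeasurableSpace.pi : MeasurableSpace (↥S → Bool))
      = ⨆ j : ↥S, MeasurableSpace.comap (fun y => y j) inferInstance from rfl]
  rw [MeasurableSpace.comap_iSup]
  exact iSup_congr fun j => MeasurableSpace.comap_comp

lemma cylSigmaB_eq_generateFrom :
    cylSigmaB ({(0 : Zd d)}ᶜ : Set (Zd d)) = MeasurableSpace.generateFrom (Gset d) := by
  apply le_antisymm
  · rw [cylSigmaB_eq_iSup]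
    refine iSup_le fun j => ?_
    intro s hs
    rcases MeasurableSpace.measurableSet_comap.mp hs with ⟨C, _, rfl⟩
    exact MeasurableSpace.measurableSet_generateFrom
      ⟨(j : Zd d), Set.mem_compl_singleton_iff.mp j.2, C, rfl⟩
  · apply MeasurableSpace.generateFrom_le
    rintro B ⟨i, hi, C, rfl⟩
    exact ⟨(fun y : ↥({(0 : Zd d)}ᶜ : Set (Zd d)) → Bool => y ⟨i, Set.mem_compl_singleton_iff.mpr hi⟩) ⁻¹' C,
      measurable_pi_apply _ (MeasurableSet.of_discrete), rfl⟩


/-! ### The algebra of 0-free finite-dimensional sets -/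

def IsAlg (B : Set (SpinConf d)) : Prop :=
  ∃ Λ : Finset (Zd d), (0 : Zd d) ∉ Λ ∧ ∃ F : Set (↥Λ → Bool), B = res Λ ⁻¹' F

lemma res_mono {Λ₁ Λ : Finset (Zd d)} (h : Λ₁ ⊆ Λ) (F : Set (↥Λ₁ → Bool)) :
    res (d := d) Λ₁ ⁻¹' F = res Λ ⁻¹' ((fun y (j : ↥Λ₁) => y ⟨j.1, h j.2⟩) ⁻¹' F) := rfl

lemma isAlg_empty : IsAlg (∅ : Set (SpinConf d)) :=
  ⟨∅, Finset.notMem_empty _, ∅, by simp⟩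

lemma IsAlg.compl {B : Set (SpinConf d)} (h : IsAlg B) : IsAlg Bᶜ := by
  obtain ⟨Λ, h0, F, rfl⟩ := h
  exact ⟨Λ, h0, Fᶜ, by rw [Set.preimage_compl]⟩

lemma IsAlg.union {B₁ B₂ : Set (SpinConf d)} (h₁ : IsAlg B₁) (h₂ : IsAlg B₂) :
    IsAlg (B₁ ∪ B₂) := by
  obtain ⟨Λ₁, h01, F₁, rfl⟩ := h₁
  obtain ⟨Λ₂, h02, F₂, rfl⟩ := h₂
  refine ⟨Λ₁ ∪ Λ₂, by simp [h01, h02],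
    ((fun y (j : ↥Λ₁) => y ⟨j.1, Finset.subset_union_left j.2⟩) ⁻¹' F₁) ∪
      ((fun y (j : ↥Λ₂) => y ⟨j.1, Finset.subset_union_right j.2⟩) ⁻¹' F₂), ?_⟩
  rw [Set.preimage_union, ← res_mono, ← res_mono]

lemma isAlg_biUnion (T : Finset ℕ) (f : ℕ → Set (SpinConf d))
    (h : ∀ n ∈ T, IsAlg (f n)) : IsAlg (⋃ n ∈ T, f n) := by
  classical
  induction T using Finset.induction_on with
  | empty => simpa using isAlg_empty
  | insert _ _ hx ih =>
    rw [Finset.set_biUnion_insert]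
    exact (h _ (Finset.mem_insert_self _ _)).union
      (ih fun n hn => h n (Finset.mem_insert_of_mem hn))

/-! ### Elementary facts about `pflip` -/

lemma exp_lt_one {t : ℝ} (ht : 0 < t) : Real.exp (-2 * t) < 1 := by
  rw [show (1 : ℝ) = Real.exp 0 from (Real.exp_zero).symm]
  exact Real.exp_lt_exp.mpr (by linarith)

lemma exp_pos' (t : ℝ) : 0 < Real.exp (-2 * t) := Real.exp_pos _

lemma lo_pos {t : ℝ} (ht : 0 < t) : 0 < (1 - Real.exp (-2 * t)) / 2 := by
  have := exp_lt_one ht; linarith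

lemma lo_le_one (t : ℝ) : (1 - Real.exp (-2 * t)) / 2 ≤ 1 := by
  have := exp_pos' t; linarith

lemma hi_nonneg (t : ℝ) : 0 ≤ (1 + Real.exp (-2 * t)) / 2 := by
  have := exp_pos' t; linarith

lemma hi_le_one {t : ℝ} (ht : 0 < t) : (1 + Real.exp (-2 * t)) / 2 ≤ 1 := by
  have := exp_lt_one ht; linarith

lemma pflip_le {t : ℝ} (ht : 0 < t) (s s' : Bool) :
    pflip t s s' ≤ (1 + Real.exp (-2 * t)) / 2 := by
  have := exp_pos' t
  unfold pflip; split <;> linarith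

lemma pflip_ge {t : ℝ} (ht : 0 < t) (s s' : Bool) :
    (1 - Real.exp (-2 * t)) / 2 ≤ pflip t s s' := by
  have := exp_pos' t
  unfold pflip; split <;> linarith

lemma pflip_nonneg {t : ℝ} (ht : 0 < t) (s s' : Bool) : 0 ≤ pflip t s s' :=
  le_trans (lo_pos ht).le (pflip_ge ht s s')

lemma pflip_le_one {t : ℝ} (ht : 0 < t) (s s' : Bool) : pflip t s s' ≤ 1 :=
  le_trans (pflip_le ht s s') (hi_le_one ht)

/-! ### Cylinder computations -/

lemma measurable_prod_pflip {t : ℝ} (Λ : Finset (Zd d)) (ω : ↥Λ → Bool) :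
    Measurable fun σ : SpinConf d => ∏ i : ↥Λ, pflip t (σ i) (ω i) :=
  Finset.measurable_prod _ fun i _ =>
    (measurable_of_countable fun b => pflip t b (ω i)).comp (measurable_pi_apply _)

lemma prod_pflip_nonneg {t : ℝ} (ht : 0 < t) (Λ : Finset (Zd d)) (ω : ↥Λ → Bool)
    (σ : SpinConf d) : 0 ≤ ∏ i : ↥Λ, pflip t (σ i) (ω i) :=
  Finset.prod_nonneg fun i _ => pflip_nonneg ht _ _

lemma prod_pflip_le_one {t : ℝ} (ht : 0 < t) (Λ : Finset (Zd d)) (ω : ↥Λ → Bool)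
    (σ : SpinConf d) : ∏ i : ↥Λ, pflip t (σ i) (ω i) ≤ 1 :=
  Finset.prod_le_one (fun i _ => pflip_nonneg ht _ _) fun i _ => pflip_le_one ht _ _

lemma integrable_bounded (ν0 : Measure (SpinConf d)) [IsProbabilityMeasure ν0]
    {f : SpinConf d → ℝ} (hm : Measurable f) (h0 : ∀ σ, 0 ≤ f σ) (h1 : ∀ σ, f σ ≤ 1) :
    Integrable f ν0 := by
  refine (integrable_const (1 : ℝ)).mono' hm.aestronglyMeasurable (ae_of_all _ fun σ => ?_)
  rw [Real.norm_of_nonneg (h0 σ)]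
  exact h1 σ

lemma cyl_insert (a : Bool) (Λ : Finset (Zd d)) (h0 : (0 : Zd d) ∉ Λ) (ω : ↥Λ → Bool) :
    {σ : SpinConf d | σ 0 = a} ∩ cylB Λ ω
      = cylB (insert (0 : Zd d) Λ)
          (fun j => if h : (j : Zd d) ∈ Λ then ω ⟨j, h⟩ else a) := by
  ext σ
  constructor
  · rintro ⟨h1, h2⟩ j
    show σ (j : Zd d) = if h : (j : Zd d) ∈ Λ then ω ⟨j, h⟩ else a
    by_cases hj : (j : Zd d) ∈ Λ
    · rw [dif_pos hj]; exact h2 ⟨j, hj⟩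
    · rw [dif_neg hj]
      have hj0 : (j : Zd d) = 0 := by
        rcases Finset.mem_insert.mp j.2 with h | h
        · exact h
        · exact absurd h hj
      rw [hj0]; exact h1
  · intro h
    constructor
    · have h1 := h ⟨0, Finset.mem_insert_self _ _⟩
      have h2 : σ (0 : Zd d) = if h : (0 : Zd d) ∈ Λ then ω ⟨0, h⟩ else a := h1
      rwa [dif_neg h0] at h2
    · intro j
      have h1 := h ⟨j, Finset.mem_insert_of_mem j.2⟩
      have h2 : σ (j : Zd d) = if h : (j : Zd d) ∈ Λ then ω ⟨j, h⟩ else a := h1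
      rwa [dif_pos j.2, Subtype.coe_eta] at h2

lemma prod_insert_eq {t : ℝ} (a : Bool) (Λ : Finset (Zd d)) (h0 : (0 : Zd d) ∉ Λ)
    (ω : ↥Λ → Bool) (σ : SpinConf d) :
    (∏ i : ↥(insert (0 : Zd d) Λ),
        pflip t (σ i) ((fun j : ↥(insert (0 : Zd d) Λ) =>
          if h : (j : Zd d) ∈ Λ then ω ⟨j, h⟩ else a) i))
      = pflip t (σ 0) a * ∏ i : ↥Λ, pflip t (σ i) (ω i) := by
  classical
  set f : Zd d → ℝ := fun i => pflip t (σ i) (if h : i ∈ Λ then ω ⟨i, h⟩ else a) with hf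
  have e1 : (∏ i : ↥(insert (0 : Zd d) Λ),
      pflip t (σ i) ((fun j : ↥(insert (0 : Zd d) Λ) =>
        if h : (j : Zd d) ∈ Λ then ω ⟨j, h⟩ else a) i)) = ∏ i ∈ insert (0 : Zd d) Λ, f i :=
    Finset.prod_coe_sort (insert (0 : Zd d) Λ) f
  rw [e1, Finset.prod_insert h0]
  congr 1
  · show pflip t (σ 0) (if h : (0 : Zd d) ∈ Λ then ω ⟨0, h⟩ else a) = pflip t (σ 0) a
    rw [dif_neg h0]
  · rw [← Finset.prod_coe_sort Λ f]
    refine Finset.prod_congr rfl fun i _ => ?_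
    show pflip t (σ i) (if h : (i : Zd d) ∈ Λ then ω ⟨i, h⟩ else a) = pflip t (σ i) (ω i)
    rw [dif_pos i.2, Subtype.coe_eta]

/-! ### Measure bounds on cylinders and algebra sets -/

section Bounds

variable {ν0 ν : Measure (SpinConf d)} [IsProbabilityMeasure ν0] [IsProbabilityMeasure ν]
variable {t : ℝ}

lemma cyl_bound (ht : 0 < t) (hevt : IsFlipEvolved ν0 ν t) (a : Bool)
    (Λ : Finset (Zd d)) (h0 : (0 : Zd d) ∉ Λ) (ω : ↥Λ → Bool) :
    ENNReal.ofReal ((1 - Real.exp (-2 * t)) / 2) * ν (cylB Λ ω)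
        ≤ ν ({σ : SpinConf d | σ 0 = a} ∩ cylB Λ ω)
      ∧ ν ({σ : SpinConf d | σ 0 = a} ∩ cylB Λ ω)
        ≤ ENNReal.ofReal ((1 + Real.exp (-2 * t)) / 2) * ν (cylB Λ ω) := by
  have e1 : ν (cylB Λ ω) = ENNReal.ofReal (∫ σ, ∏ i : ↥Λ, pflip t (σ i) (ω i) ∂ν0) := hevt Λ ω
  have e2 : ν ({σ : SpinConf d | σ 0 = a} ∩ cylB Λ ω)
      = ENNReal.ofReal (∫ σ, pflip t (σ 0) a * ∏ i : ↥Λ, pflip t (σ i) (ω i) ∂ν0) := by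
    rw [cyl_insert a Λ h0 ω, hevt]
    congr 1
    exact integral_congr_ae (ae_of_all _ fun σ => prod_insert_eq a Λ h0 ω σ)
  have hint : Integrable (fun σ : SpinConf d => ∏ i : ↥Λ, pflip t (σ i) (ω i)) ν0 :=
    integrable_bounded ν0 (measurable_prod_pflip Λ ω) (prod_pflip_nonneg ht Λ ω)
      (prod_pflip_le_one ht Λ ω)
  have hint2 : Integrable
      (fun σ : SpinConf d => pflip t (σ 0) a * ∏ i : ↥Λ, pflip t (σ i) (ω i)) ν0 := by
    refine integrable_bounded ν0 ?_ (fun σ => ?_) (fun σ => ?_)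
    · exact ((measurable_of_countable fun b => pflip t b a).comp
        (measurable_pi_apply _)).mul (measurable_prod_pflip Λ ω)
    · exact mul_nonneg (pflip_nonneg ht _ _) (prod_pflip_nonneg ht Λ ω σ)
    · exact mul_le_one₀ (pflip_le_one ht _ _) (prod_pflip_nonneg ht Λ ω σ)
        (prod_pflip_le_one ht Λ ω σ)
  have hIa_ge : (1 - Real.exp (-2 * t)) / 2 * ∫ σ, ∏ i : ↥Λ, pflip t (σ i) (ω i) ∂ν0
      ≤ ∫ σ, pflip t (σ 0) a * ∏ i : ↥Λ, pflip t (σ i) (ω i) ∂ν0 := by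
    rw [← integral_const_mul]
    refine integral_mono (hint.const_mul _) hint2 fun σ => ?_
    exact mul_le_mul_of_nonneg_right (pflip_ge ht _ _) (prod_pflip_nonneg ht Λ ω σ)
  have hIa_le : (∫ σ, pflip t (σ 0) a * ∏ i : ↥Λ, pflip t (σ i) (ω i) ∂ν0)
      ≤ (1 + Real.exp (-2 * t)) / 2 * ∫ σ, ∏ i : ↥Λ, pflip t (σ i) (ω i) ∂ν0 := by
    rw [← integral_const_mul]
    refine integral_mono hint2 (hint.const_mul _) fun σ => ?_
    exact mul_le_mul_of_nonneg_right (pflip_le ht _ _) (prod_pflip_nonneg ht Λ ω σ)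
  constructor
  · rw [e1, e2, ← ENNReal.ofReal_mul (lo_pos ht).le]
    exact ENNReal.ofReal_le_ofReal hIa_ge
  · rw [e1, e2, ← ENNReal.ofReal_mul (hi_nonneg t)]
    exact ENNReal.ofReal_le_ofReal hIa_le

lemma alg_bound (ht : 0 < t) (hevt : IsFlipEvolved ν0 ν t) (a : Bool)
    {B : Set (SpinConf d)} (hB : IsAlg B) :
    ENNReal.ofReal ((1 - Real.exp (-2 * t)) / 2) * ν B
        ≤ ν ({σ : SpinConf d | σ 0 = a} ∩ B)
      ∧ ν ({σ : SpinConf d | σ 0 = a} ∩ B)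
        ≤ ENNReal.ofReal ((1 + Real.exp (-2 * t)) / 2) * ν B := by
  classical
  obtain ⟨Λ, h0, F, rfl⟩ := hB
  set T : Finset (↥Λ → Bool) := (Set.toFinite F).toFinset with hT
  have hdecomp : res Λ ⁻¹' F = ⋃ ω ∈ T, cylB Λ ω := by
    ext σ
    simp only [Set.mem_preimage, Set.mem_iUnion, cylB_eq_preimage, hT,
      Set.Finite.mem_toFinset, Set.mem_singleton_iff]
    constructor
    · intro h; exact ⟨res Λ σ, h, rfl⟩
    · rintro ⟨ω, hω, rfl⟩; exact hω
  have hdisj : (↑T : Set (↥Λ → Bool)).PairwiseDisjoint (fun ω => cylB Λ ω) := by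
    intro ω₁ _ ω₂ _ hne
    rw [Function.onFun, cylB_eq_preimage, cylB_eq_preimage]
    exact Disjoint.preimage _ (Set.disjoint_singleton.mpr hne)
  have hmeas : ∀ ω ∈ T, MeasurableSet (cylB Λ ω) := fun ω _ => measurableSet_cylB Λ ω
  have hA : MeasurableSet {σ : SpinConf d | σ 0 = a} := by
    have h : {σ : SpinConf d | σ 0 = a} = (fun σ : SpinConf d => σ 0) ⁻¹' {a} := rfl
    rw [h]; exact measurable_pi_apply (0 : Zd d) (measurableSet_singleton a)
  have hinter : {σ : SpinConf d | σ 0 = a} ∩ ⋃ ω ∈ T, cylB Λ ω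
      = ⋃ ω ∈ T, ({σ : SpinConf d | σ 0 = a} ∩ cylB Λ ω) := by
    rw [Set.inter_iUnion₂]
  rw [hdecomp, hinter, measure_biUnion_finset hdisj hmeas,
    measure_biUnion_finset (hdisj.mono_on fun ω _ => Set.inter_subset_right)
      (fun ω _ => hA.inter (measurableSet_cylB Λ ω)), Finset.mul_sum, Finset.mul_sum]
  exact ⟨Finset.sum_le_sum fun ω _ => (cyl_bound ht hevt a Λ h0 ω).1,
    Finset.sum_le_sum fun ω _ => (cyl_bound ht hevt a Λ h0 ω).2⟩

end Bounds

/-! ### Approximation of `F_{0^c}`-measurable sets by algebra sets -/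

lemma approx (ν : Measure (SpinConf d)) [IsProbabilityMeasure ν]
    {B : Set (SpinConf d)}
    (hB : MeasurableSet[cylSigmaB ({(0 : Zd d)}ᶜ : Set (Zd d))] B) :
    ∀ ε : ℝ≥0∞, 0 < ε → ∃ B', IsAlg B' ∧ ν (B ∆ B') ≤ ε := by
  rw [cylSigmaB_eq_generateFrom] at hB
  refine MeasurableSpace.generateFrom_induction
    (p := fun B _ => ∀ ε : ℝ≥0∞, 0 < ε → ∃ B', IsAlg B' ∧ ν (B ∆ B') ≤ ε)
    (C := Gset d) ?_ ?_ ?_ ?_ B hB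
  · rintro C ⟨i, hi, D, rfl⟩ _ ε _
    refine ⟨(fun σ : SpinConf d => σ i) ⁻¹' D, ⟨{i}, by simpa using fun h => hi h.symm,
      (fun y : ↥({i} : Finset (Zd d)) → Bool => y ⟨i, Finset.mem_singleton_self i⟩) ⁻¹' D,
      rfl⟩, ?_⟩
    rw [symmDiff_self]
    simp
  · intro ε _
    exact ⟨∅, isAlg_empty, by rw [symmDiff_self]; simp⟩
  · rintro C hC ih ε hε
    obtain ⟨B', hB', hle⟩ := ih ε hε
    exact ⟨B'ᶜ, hB'.compl, by rwa [compl_symmDiff_compl]⟩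
  · intro s hs ih ε hε
    classical
    have hsm : ∀ n, MeasurableSet (s n) := fun n =>
      cylSigmaB_le _ _ (by rw [cylSigmaB_eq_generateFrom]; exact hs n)
    set g : ℕ → Set (SpinConf d) := fun n => (⋃ i, s i) \ ⋃ k ∈ Finset.range n, s k with hg
    have hganti : Antitone g := by
      intro m n hmn
      refine Set.diff_subset_diff_right ?_
      exact Set.biUnion_subset_biUnion_left (by exact_mod_cast Finset.range_subset_range.mpr hmn)
    have hgmeas : ∀ n, MeasurableSet (g n) := fun n =>
      (MeasurableSet.iUnion hsm).diff (Finset.measurableSet_biUnion _ fun k _ => hsm k)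
    have hginter : ⋂ n, g n = ∅ := by
      ext x
      simp only [Set.mem_iInter, Set.mem_empty_iff_false, iff_false, not_forall]
      by_cases hx : x ∈ ⋃ i, s i
      · obtain ⟨k, hk⟩ := Set.mem_iUnion.mp hx
        refine ⟨k + 1, fun hmem => hmem.2 ?_⟩
        exact Set.mem_biUnion (Finset.mem_range.mpr (Nat.lt_succ_self k)) hk
      · exact ⟨0, fun hmem => hx hmem.1⟩
    have htend : Tendsto (ν ∘ g) atTop (𝓝 0) := by
      have := tendsto_measure_iInter_atTop (μ := ν)
        (fun n => (hgmeas n).nullMeasurableSet) hganti ⟨0, measure_ne_top ν _⟩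
      rwa [hginter, measure_empty] at this
    have hε2 : (0 : ℝ≥0∞) < ε / 2 := ENNReal.half_pos hε.ne'
    obtain ⟨N₀, hN₀⟩ := eventually_atTop.mp (htend.eventually_lt_const hε2)
    set N : ℕ := N₀ + 1 with hN
    have hgN : ν (g N) < ε / 2 := hN₀ N (Nat.le_succ N₀)
    have hη : (0 : ℝ≥0∞) < ε / 2 / (N : ℝ≥0∞) :=
      ENNReal.div_pos hε2.ne' (ENNReal.natCast_ne_top N)
    choose B' hB'alg hB'le using fun n => ih n (ε / 2 / (N : ℝ≥0∞)) hη
    refine ⟨⋃ k ∈ Finset.range N, B' k,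
      isAlg_biUnion _ _ fun k _ => hB'alg k, ?_⟩
    have hsub : (⋃ i, s i) ∆ (⋃ k ∈ Finset.range N, B' k)
        ⊆ g N ∪ ⋃ k ∈ Finset.range N, (s k ∆ B' k) := by
      intro x hx
      rcases Set.mem_symmDiff.mp hx with ⟨hx1, hx2⟩ | ⟨hx1, hx2⟩
      · by_cases hx3 : x ∈ ⋃ k ∈ Finset.range N, s k
        · obtain ⟨k, hk, hxk⟩ := Set.mem_iUnion₂.mp hx3
          refine Or.inr (Set.mem_iUnion₂.mpr ⟨k, hk, ?_⟩)
          exact Set.mem_symmDiff.mpr (Or.inl ⟨hxk,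
            fun hxB => hx2 (Set.mem_iUnion₂.mpr ⟨k, hk, hxB⟩)⟩)
        · exact Or.inl ⟨hx1, hx3⟩
      · obtain ⟨k, hk, hxk⟩ := Set.mem_iUnion₂.mp hx1
        refine Or.inr (Set.mem_iUnion₂.mpr ⟨k, hk, ?_⟩)
        exact Set.mem_symmDiff.mpr (Or.inr ⟨hxk,
          fun hxs => hx2 (Set.mem_iUnion.mpr ⟨k, hxs⟩)⟩)
    calc ν ((⋃ i, s i) ∆ (⋃ k ∈ Finset.range N, B' k))
        ≤ ν (g N ∪ ⋃ k ∈ Finset.range N, (s k ∆ B' k)) := measure_mono hsub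
      _ ≤ ν (g N) + ν (⋃ k ∈ Finset.range N, (s k ∆ B' k)) := measure_union_le _ _
      _ ≤ ν (g N) + ∑ k ∈ Finset.range N, ν (s k ∆ B' k) := by
          exact add_le_add_right (measure_biUnion_finset_le _ _) _
      _ ≤ ε / 2 + ∑ k ∈ Finset.range N, (ε / 2 / (N : ℝ≥0∞)) := by
          exact add_le_add hgN.le (Finset.sum_le_sum fun k _ => hB'le k)
      _ ≤ ε / 2 + ε / 2 := by
          refine add_le_add_right ?_ _
          rw [Finset.sum_const, Finset.card_range, nsmul_eq_mul]
          exact ENNReal.mul_div_le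
      _ = ε := ENNReal.add_halves ε

/-! ### Bounds for all `F_{0^c}`-measurable sets -/

lemma m_bound {ν0 ν : Measure (SpinConf d)} [IsProbabilityMeasure ν0]
    [IsProbabilityMeasure ν] {t : ℝ} (ht : 0 < t) (hevt : IsFlipEvolved ν0 ν t) (a : Bool)
    {B : Set (SpinConf d)}
    (hB : MeasurableSet[cylSigmaB ({(0 : Zd d)}ᶜ : Set (Zd d))] B) :
    ENNReal.ofReal ((1 - Real.exp (-2 * t)) / 2) * ν B
        ≤ ν ({σ : SpinConf d | σ 0 = a} ∩ B)
      ∧ ν ({σ : SpinConf d | σ 0 = a} ∩ B)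
        ≤ ENNReal.ofReal ((1 + Real.exp (-2 * t)) / 2) * ν B := by
  set A : Set (SpinConf d) := {σ : SpinConf d | σ 0 = a} with hA
  constructor
  · refine ENNReal.le_of_forall_pos_le_add fun ε hε _ => ?_
    have hε2 : (0 : ℝ≥0∞) < (ε : ℝ≥0∞) / 2 :=
      ENNReal.half_pos (by exact_mod_cast hε.ne')
    obtain ⟨B', hB'alg, hB'le⟩ := approx ν hB ((ε : ℝ≥0∞) / 2) hε2
    have sub1 : B ⊆ B' ∪ B ∆ B' := by
      intro x hx
      by_cases h : x ∈ B'
      · exact Or.inl h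
      · exact Or.inr (Set.mem_symmDiff.mpr (Or.inl ⟨hx, h⟩))
    have sub2 : A ∩ B' ⊆ (A ∩ B) ∪ B ∆ B' := by
      rintro x ⟨hxA, hxB'⟩
      by_cases h : x ∈ B
      · exact Or.inl ⟨hxA, h⟩
      · exact Or.inr (Set.mem_symmDiff.mpr (Or.inr ⟨hxB', h⟩))
    have hints : ENNReal.ofReal ((1 - Real.exp (-2 * t)) / 2) ≤ 1 :=
      ENNReal.ofReal_le_one.mpr (lo_le_one t)
    calc ENNReal.ofReal ((1 - Real.exp (-2 * t)) / 2) * ν B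
        ≤ ENNReal.ofReal ((1 - Real.exp (-2 * t)) / 2) * (ν B' + ν (B ∆ B')) := by
          refine mul_le_mul_right ?_ _
          exact (measure_mono sub1).trans (measure_union_le _ _)
      _ ≤ ENNReal.ofReal ((1 - Real.exp (-2 * t)) / 2) * ν B' + 1 * ν (B ∆ B') := by
          rw [mul_add]
          exact add_le_add_right (mul_le_mul' hints le_rfl) _
      _ ≤ ν (A ∩ B') + (ε : ℝ≥0∞) / 2 := by
          rw [one_mul]
          exact add_le_add (alg_bound ht hevt a hB'alg).1 hB'le
      _ ≤ (ν (A ∩ B) + ν (B ∆ B')) + (ε : ℝ≥0∞) / 2 := by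
          refine add_le_add_left ((measure_mono sub2).trans (measure_union_le _ _)) _
      _ ≤ (ν (A ∩ B) + (ε : ℝ≥0∞) / 2) + (ε : ℝ≥0∞) / 2 :=
          add_le_add_left (add_le_add_right hB'le _) _
      _ = ν (A ∩ B) + (ε : ℝ≥0∞) := by rw [add_assoc, ENNReal.add_halves]
  · refine ENNReal.le_of_forall_pos_le_add fun ε hε _ => ?_
    have hε2 : (0 : ℝ≥0∞) < (ε : ℝ≥0∞) / 2 :=
      ENNReal.half_pos (by exact_mod_cast hε.ne')
    obtain ⟨B', hB'alg, hB'le⟩ := approx ν hB ((ε : ℝ≥0∞) / 2) hε2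
    have sub1 : A ∩ B ⊆ (A ∩ B') ∪ B ∆ B' := by
      rintro x ⟨hxA, hxB⟩
      by_cases h : x ∈ B'
      · exact Or.inl ⟨hxA, h⟩
      · exact Or.inr (Set.mem_symmDiff.mpr (Or.inl ⟨hxB, h⟩))
    have sub2 : B' ⊆ B ∪ B ∆ B' := by
      intro x hx
      by_cases h : x ∈ B
      · exact Or.inl h
      · exact Or.inr (Set.mem_symmDiff.mpr (Or.inr ⟨hx, h⟩))
    have hints : ENNReal.ofReal ((1 + Real.exp (-2 * t)) / 2) ≤ 1 :=
      ENNReal.ofReal_le_one.mpr (hi_le_one ht)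
    calc ν (A ∩ B)
        ≤ ν (A ∩ B') + ν (B ∆ B') := (measure_mono sub1).trans (measure_union_le _ _)
      _ ≤ ENNReal.ofReal ((1 + Real.exp (-2 * t)) / 2) * ν B' + (ε : ℝ≥0∞) / 2 :=
          add_le_add (alg_bound ht hevt a hB'alg).2 hB'le
      _ ≤ ENNReal.ofReal ((1 + Real.exp (-2 * t)) / 2) * (ν B + ν (B ∆ B'))
            + (ε : ℝ≥0∞) / 2 := by
          refine add_le_add_left (mul_le_mul_right
            ((measure_mono sub2).trans (measure_union_le _ _)) _) _
      _ ≤ (ENNReal.ofReal ((1 + Real.exp (-2 * t)) / 2) * ν B + 1 * ((ε : ℝ≥0∞) / 2))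
            + (ε : ℝ≥0∞) / 2 := by
          rw [mul_add]
          exact add_le_add_left (add_le_add_right
            (mul_le_mul' hints hB'le) _) _
      _ = ENNReal.ofReal ((1 + Real.exp (-2 * t)) / 2) * ν B + (ε : ℝ≥0∞) := by
          rw [one_mul, add_assoc, ENNReal.add_halves]

/-! ### Almost-everywhere bounds on the conditional probabilities -/

lemma condProb_bounds {ν0 ν : Measure (SpinConf d)} [IsProbabilityMeasure ν0]
    [IsProbabilityMeasure ν] {t : ℝ} (ht : 0 < t) (hevt : IsFlipEvolved ν0 ν t) (a : Bool) :
    ∀ᵐ η ∂ν, (1 - Real.exp (-2 * t)) / 2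
        ≤ condProbB ν a ({(0 : Zd d)}ᶜ : Set (Zd d)) η
      ∧ condProbB ν a ({(0 : Zd d)}ᶜ : Set (Zd d)) η ≤ (1 + Real.exp (-2 * t)) / 2 := by
  have hm : cylSigmaB ({(0 : Zd d)}ᶜ : Set (Zd d))
      ≤ (inferInstance : MeasurableSpace (SpinConf d)) := cylSigmaB_le _
  set A : Set (SpinConf d) := {σ : SpinConf d | σ 0 = a} with hA
  have hAmeas : MeasurableSet A := by
    have h : A = (fun σ : SpinConf d => σ 0) ⁻¹' {a} := rfl
    rw [h]; exact measurable_pi_apply (0 : Zd d) (measurableSet_singleton a)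
  set f : SpinConf d → ℝ := A.indicator fun _ => (1 : ℝ) with hf
  have hf_int : Integrable f ν := (integrable_const (1 : ℝ)).indicator hAmeas
  have hcond : condProbB ν a ({(0 : Zd d)}ᶜ : Set (Zd d))
      = ν[f|cylSigmaB ({(0 : Zd d)}ᶜ : Set (Zd d))] := rfl
  have hsetf : ∀ s : Set (SpinConf d),
      ∫ x in s, f x ∂ν = (ν (A ∩ s)).toReal := by
    intro s
    rw [hf, setIntegral_indicator hAmeas, setIntegral_const, smul_eq_mul, mul_one,
      Set.inter_comm]
    rfl
  have lo_bound : ∀ s : Set (SpinConf d),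
      MeasurableSet[cylSigmaB ({(0 : Zd d)}ᶜ : Set (Zd d))] s →
      (1 - Real.exp (-2 * t)) / 2 * (ν s).toReal ≤ (ν (A ∩ s)).toReal := by
    intro s hs
    have h := (m_bound ht hevt a hs).1
    have h2 := ENNReal.toReal_mono (measure_ne_top ν _) h
    rwa [ENNReal.toReal_mul, ENNReal.toReal_ofReal (lo_pos ht).le] at h2
  have hi_bound : ∀ s : Set (SpinConf d),
      MeasurableSet[cylSigmaB ({(0 : Zd d)}ᶜ : Set (Zd d))] s →
      (ν (A ∩ s)).toReal ≤ (1 + Real.exp (-2 * t)) / 2 * (ν s).toReal := by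
    intro s hs
    have h := (m_bound ht hevt a hs).2
    have h2 := ENNReal.toReal_mono (by finiteness) h
    rwa [ENNReal.toReal_mul, ENNReal.toReal_ofReal (hi_nonneg t)] at h2
  have h_low : ∀ᵐ η ∂ν,
      (1 - Real.exp (-2 * t)) / 2 ≤ (ν[f|cylSigmaB ({(0 : Zd d)}ᶜ : Set (Zd d))]) η := by
    have hsm : StronglyMeasurable[cylSigmaB ({(0 : Zd d)}ᶜ : Set (Zd d))]
        (fun η => (ν[f|cylSigmaB ({(0 : Zd d)}ᶜ : Set (Zd d))]) η
          - (1 - Real.exp (-2 * t)) / 2) :=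
      stronglyMeasurable_condExp.sub stronglyMeasurable_const
    have h0 : (0 : SpinConf d → ℝ) ≤ᵐ[ν.trim hm]
        fun η => (ν[f|cylSigmaB ({(0 : Zd d)}ᶜ : Set (Zd d))]) η
          - (1 - Real.exp (-2 * t)) / 2 := by
      refine ae_nonneg_of_forall_setIntegral_nonneg
        ((integrable_condExp.sub (integrable_const _)).trim hm hsm) ?_
      intro s hs _
      rw [← setIntegral_trim hm hsm hs]
      rw [integral_sub integrable_condExp.integrableOn (integrable_const _).integrableOn]
      rw [setIntegral_condExp hm hf_int hs, hsetf s, setIntegral_const, smul_eq_mul]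
      have := lo_bound s hs
      show (0:ℝ) ≤ (ν (A ∩ s)).toReal - (ν s).toReal * ((1 - Real.exp (-2 * t)) / 2)
      linarith [this]
    filter_upwards [ae_of_ae_trim hm h0] with η hη
    have hη' : (0:ℝ) ≤ (ν[f|cylSigmaB ({(0 : Zd d)}ᶜ : Set (Zd d))]) η
          - (1 - Real.exp (-2 * t)) / 2 := hη
    linarith
  have h_high : ∀ᵐ η ∂ν,
      (ν[f|cylSigmaB ({(0 : Zd d)}ᶜ : Set (Zd d))]) η ≤ (1 + Real.exp (-2 * t)) / 2 := by
    have hsm : StronglyMeasurable[cylSigmaB ({(0 : Zd d)}ᶜ : Set (Zd d))]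
        (fun η => (1 + Real.exp (-2 * t)) / 2
          - (ν[f|cylSigmaB ({(0 : Zd d)}ᶜ : Set (Zd d))]) η) :=
      stronglyMeasurable_const.sub stronglyMeasurable_condExp
    have h0 : (0 : SpinConf d → ℝ) ≤ᵐ[ν.trim hm]
        fun η => (1 + Real.exp (-2 * t)) / 2
          - (ν[f|cylSigmaB ({(0 : Zd d)}ᶜ : Set (Zd d))]) η := by
      refine ae_nonneg_of_forall_setIntegral_nonneg
        (((integrable_const _).sub integrable_condExp).trim hm hsm) ?_
      intro s hs _
      rw [← setIntegral_trim hm hsm hs]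
      rw [integral_sub (integrable_const _).integrableOn integrable_condExp.integrableOn]
      rw [setIntegral_condExp hm hf_int hs, hsetf s, setIntegral_const, smul_eq_mul]
      have := hi_bound s hs
      show (0:ℝ) ≤ (ν s).toReal * ((1 + Real.exp (-2 * t)) / 2) - (ν (A ∩ s)).toReal
      linarith [this]
    filter_upwards [ae_of_ae_trim hm h0] with η hη
    have hη' : (0:ℝ) ≤ (1 + Real.exp (-2 * t)) / 2
          - (ν[f|cylSigmaB ({(0 : Zd d)}ᶜ : Set (Zd d))]) η := hη
    linarith
  rw [hcond]
  filter_upwards [h_low, h_high] with η h1 h2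
  exact ⟨h1, h2⟩

lemma ratio_bounds {ν0 ν : Measure (SpinConf d)} [IsProbabilityMeasure ν0]
    [IsProbabilityMeasure ν] {t : ℝ} (ht : 0 < t) (hevt : IsFlipEvolved ν0 ν t) :
    ∀ᵐ η ∂ν, (1 - Real.exp (-2 * t)) / (1 + Real.exp (-2 * t)) ≤ flipRatio ν η
      ∧ flipRatio ν η ≤ (1 + Real.exp (-2 * t)) / (1 - Real.exp (-2 * t)) := by
  have he1 := exp_lt_one ht
  have he0 := exp_pos' t
  have hlo := lo_pos ht
  have hhi : (0:ℝ) < (1 + Real.exp (-2 * t)) / 2 := by linarith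
  filter_upwards [condProb_bounds ht hevt true, condProb_bounds ht hevt false]
    with η h1 h2
  have key : ∀ b : Bool,
      (1 - Real.exp (-2 * t)) / 2 ≤ condProbB ν b ({(0 : Zd d)}ᶜ : Set (Zd d)) η
      ∧ condProbB ν b ({(0 : Zd d)}ᶜ : Set (Zd d)) η ≤ (1 + Real.exp (-2 * t)) / 2 := by
    intro b; cases b
    · exact h2
    · exact h1
  obtain ⟨hn1, hn2⟩ := key (!(η (0 : Zd d)))
  obtain ⟨hd1, hd2⟩ := key (η (0 : Zd d))
  have hdpos : 0 < condProbB ν (η (0 : Zd d)) ({(0 : Zd d)}ᶜ : Set (Zd d)) η :=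
    lt_of_lt_of_le hlo hd1
  constructor
  · have h := div_le_div₀ (le_trans hlo.le hn1) hn1 hdpos hd2
    calc (1 - Real.exp (-2 * t)) / (1 + Real.exp (-2 * t))
        = ((1 - Real.exp (-2 * t)) / 2) / ((1 + Real.exp (-2 * t)) / 2) := by
          field_simp
      _ ≤ flipRatio ν η := h
  · have h := div_le_div₀ hhi.le hn2 hlo hd1
    calc flipRatio ν η
        ≤ ((1 + Real.exp (-2 * t)) / 2) / ((1 - Real.exp (-2 * t)) / 2) := h
      _ = (1 + Real.exp (-2 * t)) / (1 - Real.exp (-2 * t)) := by field_simp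

lemma log_bound_tendsto :
    Tendsto (fun t : ℝ => Real.log ((1 + Real.exp (-2 * t)) / (1 - Real.exp (-2 * t))))
      atTop (𝓝 0) := by
  have he : Tendsto (fun t : ℝ => Real.exp (-2 * t)) atTop (𝓝 0) := by
    have h2 : Tendsto (fun t : ℝ => 2 * t) atTop atTop :=
      Tendsto.const_mul_atTop two_pos tendsto_id
    have := Real.tendsto_exp_neg_atTop_nhds_zero.comp h2
    refine this.congr fun t => ?_
    simp [Function.comp, neg_mul]
  have hcont : ContinuousAt (fun x : ℝ => Real.log ((1 + x) / (1 - x))) 0 := by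
    refine ContinuousAt.comp (g := Real.log) (f := fun x : ℝ => (1 + x) / (1 - x))
      (Real.continuousAt_log (by norm_num)) ?_
    exact ContinuousAt.div (by fun_prop) (by fun_prop) (by norm_num)
  have h1 := hcont.tendsto.comp he
  have hval : Real.log ((1 + (0:ℝ)) / (1 - 0)) = 0 := by norm_num
  rw [hval] at h1
  exact h1.congr fun t => by simp [Function.comp]

end FlipAux

/-- the explicit example in the final section of the paper:
vanishing entropy loss along the infinite-temperature Glauber trajectory. For any
initial measure `ν₀` evolved by independent rate-1 spin flips: (i) the single-site
conditional probabilities of `ν_t` lie a.e. between `(1−e^{−2t})/2` and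
`(1+e^{−2t})/2`; (ii) hence the ratio `r_t` lies a.e. between
`(1−e^{−2t})/(1+e^{−2t})` and `(1+e^{−2t})/(1−e^{−2t})`; and (iii)
`∫ log r_t dν_t → 0` as `t → ∞`. -/
theorem flip_entropy_loss_vanishes (hd : 1 ≤ d)
    (ν0 : Measure (SpinConf d)) [IsProbabilityMeasure ν0]
    (νt : ℝ → Measure (SpinConf d)) (hprob : ∀ t : ℝ, IsProbabilityMeasure (νt t))
    (hev : ∀ t : ℝ, 0 < t → IsFlipEvolved ν0 (νt t) t) :
    (∀ t : ℝ, 0 < t → ∀ a : Bool, ∀ᵐ η ∂(νt t),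
      (1 - Real.exp (-2 * t)) / 2
          ≤ condProbB (νt t) a ({(0 : Zd d)}ᶜ : Set (Zd d)) η ∧
        condProbB (νt t) a ({(0 : Zd d)}ᶜ : Set (Zd d)) η
          ≤ (1 + Real.exp (-2 * t)) / 2) ∧
    (∀ t : ℝ, 0 < t → ∀ᵐ η ∂(νt t),
      (1 - Real.exp (-2 * t)) / (1 + Real.exp (-2 * t)) ≤ flipRatio (νt t) η ∧
        flipRatio (νt t) η ≤ (1 + Real.exp (-2 * t)) / (1 - Real.exp (-2 * t))) ∧
    Tendsto (fun t : ℝ => ∫ η, Real.log (flipRatio (νt t) η) ∂(νt t)) atTop (𝓝 0) := by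
  refine ⟨?_, ?_, ?_⟩
  · intro t ht a
    haveI := hprob t
    exact FlipAux.condProb_bounds ht (hev t ht) a
  · intro t ht
    haveI := hprob t
    exact FlipAux.ratio_bounds ht (hev t ht)
  · have hb : ∀ t : ℝ, 0 < t →
        ‖∫ η, Real.log (flipRatio (νt t) η) ∂(νt t)‖
          ≤ Real.log ((1 + Real.exp (-2 * t)) / (1 - Real.exp (-2 * t))) := by
      intro t ht
      haveI := hprob t
      have h2 := FlipAux.ratio_bounds ht (hev t ht)
      have he1 := FlipAux.exp_lt_one ht
      have he0 := FlipAux.exp_pos' t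
      have hlopos : (0:ℝ) < (1 - Real.exp (-2 * t)) / (1 + Real.exp (-2 * t)) := by
        apply div_pos <;> linarith
      refine le_trans (norm_integral_le_of_norm_le_const ?_)
        (by rw [Measure.real, measure_univ, ENNReal.toReal_one, mul_one])
      filter_upwards [h2] with η hη
      obtain ⟨hl, hu⟩ := hη
      have hrpos : 0 < flipRatio (νt t) η := lt_of_lt_of_le hlopos hl
      rw [Real.norm_eq_abs, abs_le]
      constructor
      · have hlog := Real.log_le_log hlopos hl
        have hlogeq : Real.log ((1 - Real.exp (-2 * t)) / (1 + Real.exp (-2 * t)))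
            = - Real.log ((1 + Real.exp (-2 * t)) / (1 - Real.exp (-2 * t))) := by
          rw [Real.log_div (by linarith) (by linarith),
            Real.log_div (by linarith) (by linarith)]
          ring
        linarith [hlog, hlogeq ▸ hlog]
      · exact Real.log_le_log hrpos hu
    apply squeeze_zero_norm'
    · filter_upwards [eventually_gt_atTop (0:ℝ)] with t ht
      exact hb t ht
    · exact FlipAux.log_bound_tendsto
end
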